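/- arXiv:2406.18498 — 6 statements merged into one kernel-verified Lean document; each statement's English description precedes it below -/
import Mathlib

section
/- For a field K and positive integer d, define N_K(d) as the least n such that for all nonzero a₁,...,aₙ ∈ K the equation a₁x₁^d + ... + aₙxₙ^d = 0 has a nonzero solution in Kⁿ (∞ if no such n exists). Then for any field K and odd d, if N_K(d) is finite and L/K is a finite field extension of degree m, and Birch's theorem holds over K (every system of m forms of odd degree d over K in sufficiently many variables has a nonzero solution), then N_L(d) is finite. -/
open MvPolynomial

/-- `K` admits `n` such that every diagonal degree-`d` form in `n` variables with nonzero
coefficients has a nonzero solution. -/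
def DiagSolvable (K : Type*) [Field K] (d n : ℕ) : Prop :=
  ∀ a : Fin n → K, (∀ i, a i ≠ 0) →
    ∃ x : Fin n → K, x ≠ 0 ∧ ∑ i, a i * x i ^ d = 0

/-- If `N_K(d)` is finite, `L/K` is a finite extension of degree `m`, and Birch's theorem
holds over `K` for systems of `m` forms of odd degree `d`, then `N_L(d)` is finite. -/
theorem stmt1 (K L : Type*) [Field K] [Field L] [Algebra K L] [FiniteDimensional K L]
    (d : ℕ) (hd : Odd d)
    (hNK : ∃ n, DiagSolvable K d n)
    (hBirch : ∃ C : ℕ, ∀ n, C ≤ n →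
      ∀ f : Fin (Module.finrank K L) → MvPolynomial (Fin n) K,
        (∀ i, (f i).IsHomogeneous d) →
        ∃ x : Fin n → K, x ≠ 0 ∧ ∀ i, MvPolynomial.eval x (f i) = 0) :
    ∃ n, DiagSolvable L d n := by
  obtain ⟨C, hC⟩ := hBirch
  refine ⟨C + 1, ?_⟩
  intro a _
  set m := Module.finrank K L with hm
  let b : Module.Basis (Fin m) K L := Module.finBasis K L
  let f : Fin m → MvPolynomial (Fin (C + 1)) K :=
    fun j => ∑ i, MvPolynomial.C (b.repr (a i) j) * MvPolynomial.X i ^ d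
  have hhom : ∀ j, (f j).IsHomogeneous d := by
    intro j
    apply MvPolynomial.IsHomogeneous.sum
    intro i _
    have h1 : (MvPolynomial.C (b.repr (a i) j) *
        (MvPolynomial.X i : MvPolynomial (Fin (C + 1)) K) ^ d).IsHomogeneous (0 + 1 * d) :=
      (MvPolynomial.isHomogeneous_C _ _).mul ((MvPolynomial.isHomogeneous_X _ _).pow d)
    simpa using h1
  obtain ⟨x, hx, hfx⟩ := hC (C + 1) (Nat.le_succ C) f hhom
  refine ⟨fun i => algebraMap K L (x i), ?_, ?_⟩
  · intro h
    apply hx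
    funext i
    have := congrFun h i
    exact (algebraMap K L).injective (by simpa using this)
  · have key : ∑ i, a i * (algebraMap K L (x i)) ^ d = ∑ i, (x i ^ d) • a i := by
      refine Finset.sum_congr rfl fun i _ => ?_
      rw [Algebra.smul_def, map_pow, mul_comm]
    rw [key]
    have hrepr : b.repr (∑ i, (x i ^ d) • a i) = 0 := by
      rw [map_sum]
      ext j
      have hev := hfx j
      simp only [f, map_sum, MvPolynomial.eval_mul, MvPolynomial.eval_C,
        MvPolynomial.eval_pow, MvPolynomial.eval_X] at hev
      simpa [Finsupp.smul_apply, mul_comm] using hev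
    exact b.repr.map_eq_zero_iff.mp hrepr
end

section
/- Let f₁,...,f_r be homogeneous forms of the same degree d on a finite-dimensional vector space V over a field K of characteristic 0, and fix ℓ ≥ 1. Consider the restriction map Res: V^ℓ → 𝒫_d(K^ℓ)^r sending (w₁,...,w_ℓ) to the tuple of polynomials (x₁,...,x_ℓ) ↦ f_i(x₁w₁ + ... + x_ℓw_ℓ). Then the collective strength of the component forms of Res (as polynomials on V^ℓ) is at least the collective strength of (f₁,...,f_r). -/
open MvPolynomial

/-- `f` admits a decomposition `f = ∑_{i<s} g i * h i` with `g i, h i` homogeneous of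
degrees strictly between `0` and `d`. -/
def HasStrengthDecomp {K : Type*} [CommRing K] {σ : Type*} (d : ℕ)
    (f : MvPolynomial σ K) (s : ℕ) : Prop :=
  ∃ (g h : Fin s → MvPolynomial σ K) (e : Fin s → ℕ),
    (∀ i, 0 < e i ∧ e i < d ∧ (g i).IsHomogeneous (e i) ∧ (h i).IsHomogeneous (d - e i)) ∧
    f = ∑ i, g i * h i

/-- The strength of a degree-`d` form, valued in `ℕ∞`. -/
noncomputable def strength {K : Type*} [CommRing K] {σ : Type*} (d : ℕ)
    (f : MvPolynomial σ K) : ℕ∞ :=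
  sInf {s : ℕ∞ | ∃ k : ℕ, s = (k : ℕ∞) ∧ HasStrengthDecomp d f k}

/-- The component `f_i^ε` of the restriction map: the coefficient of the monomial `x^ε` in
`f i (x₁ w₁ + ⋯ + x_ℓ w_ℓ)`, viewed as a polynomial in the entries of `(w₁, …, w_ℓ)`. -/
noncomputable def resComponent {K : Type*} [CommSemiring K] (N ℓ : ℕ)
    (f : MvPolynomial (Fin N) K) (ε : Fin ℓ →₀ ℕ) : MvPolynomial (Fin ℓ × Fin N) K :=
  MvPolynomial.coeff ε
    (MvPolynomial.sumToIter K (Fin ℓ) (Fin ℓ × Fin N)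
      (MvPolynomial.aeval
        (fun k : Fin N => ∑ j : Fin ℓ, X (Sum.inl j) * X (Sum.inr (j, k)) :
          Fin N → MvPolynomial (Fin ℓ ⊕ Fin ℓ × Fin N) K) f))


/-- Scaling a homogeneous polynomial's variables by a common factor. -/
lemma aeval_mul_left_of_isHomogeneous {K B : Type*} [CommSemiring K] [CommSemiring B]
    [Algebra K B] {σ : Type*} {d : ℕ} {g : MvPolynomial σ K} (hg : g.IsHomogeneous d)
    (t : B) (x : σ → B) :
    MvPolynomial.aeval (fun k => t * x k) g = t ^ d * MvPolynomial.aeval x g := by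
  conv_lhs => rw [g.as_sum]
  conv_rhs => rw [g.as_sum]
  rw [map_sum, map_sum, Finset.mul_sum]
  refine Finset.sum_congr rfl fun m hm => ?_
  rw [aeval_monomial, aeval_monomial]
  have hdeg : (m.sum fun _ n => n) = d := by
    have := hg (MvPolynomial.mem_support_iff.mp hm)
    simpa [Finsupp.weight_apply, Finsupp.sum] using this
  have : (m.prod fun j n => (t * x j) ^ n)
      = t ^ d * m.prod fun j n => x j ^ n := by
    rw [Finsupp.prod, Finsupp.prod]
    simp_rw [mul_pow]
    rw [Finset.prod_mul_distrib, Finset.prod_pow_eq_pow_sum]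
    rw [show (∑ i ∈ m.support, m i) = d from hdeg]
  rw [this]; ring

lemma hasStrengthDecomp_aeval {K : Type*} [CommRing K] {σ τ : Type*} {d s : ℕ}
    {f : MvPolynomial σ K} (φ : σ → MvPolynomial τ K) (hφ : ∀ i, (φ i).IsHomogeneous 1) :
    HasStrengthDecomp d f s → HasStrengthDecomp d (MvPolynomial.aeval φ f) s := by
  rintro ⟨g, h, e, he, rfl⟩
  refine ⟨fun i => MvPolynomial.aeval φ (g i), fun i => MvPolynomial.aeval φ (h i), e,
    fun i => ⟨(he i).1, (he i).2.1, ?_, ?_⟩, by simp [map_sum]⟩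
  · simpa [one_mul] using (he i).2.2.1.aeval φ hφ
  · simpa [one_mul] using (he i).2.2.2.aeval φ hφ

lemma strength_aeval_le {K : Type*} [CommRing K] {σ τ : Type*} {d : ℕ}
    (f : MvPolynomial σ K) (φ : σ → MvPolynomial τ K) (hφ : ∀ i, (φ i).IsHomogeneous 1) :
    strength d (MvPolynomial.aeval φ f) ≤ strength d f := by
  apply sInf_le_sInf
  rintro s ⟨k, rfl, hk⟩
  exact ⟨k, rfl, hasStrengthDecomp_aeval φ hφ hk⟩

/-- Coefficient extraction after the diagonal scaling substitution `X j ↦ C (lam j) * X j`. -/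
lemma coeff_aeval_C_mul_X {K : Type*} [CommSemiring K] {σ : Type*} (lam : σ → K)
    (h : MvPolynomial σ K) (ε : σ →₀ ℕ) :
    MvPolynomial.coeff ε
        (MvPolynomial.aeval (fun j => MvPolynomial.C (lam j) * X j :
          σ → MvPolynomial σ K) h)
      = MvPolynomial.coeff ε h * (ε.prod fun j n => lam j ^ n) := by
  classical
  have key : ∀ (m : σ →₀ ℕ) (a : K),
      MvPolynomial.aeval (fun j => MvPolynomial.C (lam j) * X j :
          σ → MvPolynomial σ K) (monomial m a)
      = monomial m (a * m.prod fun j n => lam j ^ n) := by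
    intro m a
    rw [aeval_monomial, monomial_eq]
    have : (m.prod fun j n => (MvPolynomial.C (lam j) * X j) ^ n)
        = MvPolynomial.C (m.prod fun j n => lam j ^ n) * m.prod fun j n => (X j : MvPolynomial σ K) ^ n := by
      rw [Finsupp.prod, Finsupp.prod, Finsupp.prod]
      simp_rw [mul_pow, ← MvPolynomial.C_pow]
      rw [Finset.prod_mul_distrib, ← map_prod]
    rw [this, map_mul, algebraMap_eq]
    ring
  conv_lhs => rw [h.as_sum, map_sum]
  rw [MvPolynomial.coeff_sum]
  simp_rw [key, MvPolynomial.coeff_monomial]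
  rw [Finset.sum_eq_single ε]
  · simp
  · intro m _ hme
    simp [hme]
  · intro hne
    simp [MvPolynomial.notMem_support_iff.mp hne]

lemma coeff_sum_X_pow_pos {ℓ : ℕ} {d : ℕ} (ε : Fin ℓ →₀ ℕ) (hε : (ε.sum fun _ n => n) = d) :
    0 < MvPolynomial.coeff ε ((∑ j : Fin ℓ, X j : MvPolynomial (Fin ℓ) ℕ) ^ d) := by
  classical
  induction d generalizing ε with
  | zero =>
    have : ε = 0 := by
      ext j
      by_contra hj
      have hj' : j ∈ ε.support := Finsupp.mem_support_iff.mpr (by simpa using hj)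
      have : 0 < ε.sum fun _ n => n :=
        Finset.sum_pos' (fun _ _ => Nat.zero_le _)
          ⟨j, hj', Nat.pos_of_ne_zero (by simpa using hj)⟩
      omega
    subst this
    simp [MvPolynomial.coeff_one]
  | succ d ih =>
    obtain ⟨j0, hj0⟩ : ∃ j0, ε j0 ≠ 0 := by
      by_contra hall
      push_neg at hall
      have : ε = 0 := by ext j; simpa using hall j
      subst this
      simp at hε
    have hj0' : j0 ∈ ε.support := Finsupp.mem_support_iff.mpr hj0
    have hsub : ((ε - Finsupp.single j0 1).sum fun _ n => n) = d := by
      have hle : Finsupp.single j0 1 ≤ ε := by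
        rw [Finsupp.single_le_iff]
        omega
      have hadd : (ε - Finsupp.single j0 1) + Finsupp.single j0 1 = ε :=
        tsub_add_cancel_of_le hle
      have hsum := Finsupp.sum_add_index' (f := ε - Finsupp.single j0 1)
        (g := Finsupp.single j0 1) (h := fun (_ : Fin ℓ) (n : ℕ) => n)
        (fun _ => rfl) (fun _ _ _ => rfl)
      rw [hadd, Finsupp.sum_single_index rfl] at hsum
      omega
    rw [pow_succ, Finset.mul_sum, MvPolynomial.coeff_sum]
    set S : MvPolynomial (Fin ℓ) ℕ := (∑ j' : Fin ℓ, X j') ^ d with hS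
    have hpos : 0 < MvPolynomial.coeff ε (S * X j0) := by
      rw [MvPolynomial.coeff_mul_X' ε j0 S, if_pos hj0']
      exact ih _ hsub
    exact lt_of_lt_of_le hpos
      (Finset.single_le_sum (f := fun j => MvPolynomial.coeff ε (S * X j))
        (fun _ _ => Nat.zero_le _) (Finset.mem_univ j0))

lemma aeval_C_X_eq_C {K : Type*} [CommSemiring K] {σ τ : Type*}
    (g : MvPolynomial σ K) :
    MvPolynomial.aeval (fun k : σ => (MvPolynomial.C (X k) :
        MvPolynomial τ (MvPolynomial σ K))) g = MvPolynomial.C g := by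
  have h : (MvPolynomial.aeval (fun k : σ => (MvPolynomial.C (X k) :
        MvPolynomial τ (MvPolynomial σ K)))).toRingHom
      = (MvPolynomial.C : MvPolynomial σ K →+* MvPolynomial τ (MvPolynomial σ K)) := by
    apply MvPolynomial.ringHom_ext
    · intro a
      simp [algebraMap_eq]
    · intro k
      simp
  exact DFunLike.congr_fun h g

lemma resComponent_aeval {K : Type*} [CommSemiring K] (N ℓ d : ℕ)
    (g : MvPolynomial (Fin N) K) (hg : g.IsHomogeneous d) (lam : Fin ℓ → K) (ε : Fin ℓ →₀ ℕ) :
    MvPolynomial.aeval (fun p : Fin ℓ × Fin N => MvPolynomial.C (lam p.1) * X p.2)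
        (resComponent N ℓ g ε)
      = MvPolynomial.C (MvPolynomial.coeff ε
          ((∑ j : Fin ℓ, MvPolynomial.C (lam j) * X j : MvPolynomial (Fin ℓ) K) ^ d)) * g := by
  classical
  set Φ : MvPolynomial (Fin ℓ × Fin N) K →+* MvPolynomial (Fin N) K :=
    (MvPolynomial.aeval (fun p : Fin ℓ × Fin N =>
      MvPolynomial.C (lam p.1) * X p.2)).toRingHom with hΦ
  set u : Fin N → MvPolynomial (Fin ℓ ⊕ Fin ℓ × Fin N) K :=
    fun k => ∑ j : Fin ℓ, X (Sum.inl j) * X (Sum.inr (j, k)) with hu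
  set L' : MvPolynomial (Fin ℓ) (MvPolynomial (Fin N) K) :=
    ∑ j : Fin ℓ, MvPolynomial.C (MvPolynomial.C (lam j)) * X j with hL'
  have step1 : MvPolynomial.aeval (fun p : Fin ℓ × Fin N =>
        MvPolynomial.C (lam p.1) * X p.2) (resComponent N ℓ g ε)
      = MvPolynomial.coeff ε (MvPolynomial.map Φ
          (MvPolynomial.sumToIter K (Fin ℓ) (Fin ℓ × Fin N)
            (MvPolynomial.aeval u g))) := by
    rw [MvPolynomial.coeff_map]
    rfl
  rw [step1]
  have step2 : MvPolynomial.map Φ (MvPolynomial.sumToIter K (Fin ℓ) (Fin ℓ × Fin N)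
        (MvPolynomial.aeval u g))
      = MvPolynomial.aeval (fun k : Fin N => L' * MvPolynomial.C (X k)) g := by
    have h : ((MvPolynomial.map Φ).comp
          ((MvPolynomial.sumToIter K (Fin ℓ) (Fin ℓ × Fin N)).comp
            (MvPolynomial.aeval u).toRingHom))
        = (MvPolynomial.aeval (R := K) (fun k : Fin N => L' * MvPolynomial.C (X k))).toRingHom := by
      apply MvPolynomial.ringHom_ext
      · intro a
        show MvPolynomial.map Φ (MvPolynomial.sumToIter K (Fin ℓ) (Fin ℓ × Fin N)
            (MvPolynomial.aeval u (MvPolynomial.C a)))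
          = MvPolynomial.aeval (fun k : Fin N => L' * MvPolynomial.C (X k)) (MvPolynomial.C a)
        simp [hΦ, MvPolynomial.sumToIter_C, MvPolynomial.algebraMap_apply, algebraMap_eq]
      · intro k
        simp only [RingHom.comp_apply, AlgHom.toRingHom_eq_coe, RingHom.coe_coe, aeval_X, hu]
        rw [map_sum, map_sum]
        simp only [map_mul, MvPolynomial.sumToIter_Xl, MvPolynomial.sumToIter_Xr,
          MvPolynomial.map_X, MvPolynomial.map_C]
        rw [hL', Finset.sum_mul]
        refine Finset.sum_congr rfl fun j _ => ?_
        simp only [hΦ, AlgHom.toRingHom_eq_coe, RingHom.coe_coe, aeval_X, map_mul]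
        ring
    exact DFunLike.congr_fun h g
  rw [step2]
  rw [aeval_mul_left_of_isHomogeneous hg L' (fun k => MvPolynomial.C (X k)),
    aeval_C_X_eq_C]
  have hL'm : L' = MvPolynomial.map (MvPolynomial.C : K →+* MvPolynomial (Fin N) K)
      (∑ j : Fin ℓ, MvPolynomial.C (lam j) * X j) := by
    rw [map_sum]
    simp [hL']
  rw [hL'm, ← map_pow, mul_comm, MvPolynomial.coeff_C_mul, MvPolynomial.coeff_map, mul_comm]

lemma coeff_scaled_pow {K : Type*} [CommSemiring K] {ℓ d : ℕ} (lam : Fin ℓ → K)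
    (ε : Fin ℓ →₀ ℕ) :
    MvPolynomial.coeff ε ((∑ j : Fin ℓ, MvPolynomial.C (lam j) * X j :
        MvPolynomial (Fin ℓ) K) ^ d)
      = MvPolynomial.coeff ε ((∑ j : Fin ℓ, X j : MvPolynomial (Fin ℓ) K) ^ d)
        * (ε.prod fun j n => lam j ^ n) := by
  have : ((∑ j : Fin ℓ, MvPolynomial.C (lam j) * X j : MvPolynomial (Fin ℓ) K) ^ d)
      = MvPolynomial.aeval (R := K) (fun j => MvPolynomial.C (lam j) * X j :
          Fin ℓ → MvPolynomial (Fin ℓ) K) ((∑ j : Fin ℓ, X j) ^ d) := by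
    rw [map_pow, map_sum]
    simp
  rw [this, coeff_aeval_C_mul_X]

lemma coeff_sum_X_pow_ne_zero {K : Type*} [Field K] [CharZero K] {ℓ d : ℕ}
    (ε : Fin ℓ →₀ ℕ) (hε : (ε.sum fun _ n => n) = d) :
    MvPolynomial.coeff ε ((∑ j : Fin ℓ, X j : MvPolynomial (Fin ℓ) K) ^ d) ≠ 0 := by
  have hmap : ((∑ j : Fin ℓ, X j : MvPolynomial (Fin ℓ) K) ^ d)
      = MvPolynomial.map (Nat.castRingHom K) ((∑ j : Fin ℓ, X j : MvPolynomial (Fin ℓ) ℕ) ^ d) := by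
    rw [map_pow, map_sum]
    simp
  rw [hmap, MvPolynomial.coeff_map]
  have := coeff_sum_X_pow_pos ε hε
  simp only [Nat.castRingHom]
  exact_mod_cast Nat.cast_ne_zero.mpr (Nat.pos_iff_ne_zero.mp this)

/-- The collective strength of the components of the restriction map `Res` is at least the
collective strength of `(f₁, …, f_r)`. -/
theorem stmt4 {K : Type*} [Field K] [CharZero K] (N r ℓ d : ℕ)
    (f : Fin r → MvPolynomial (Fin N) K) (hf : ∀ i, (f i).IsHomogeneous d)
    (c : (Fin r × (Fin ℓ →₀ ℕ)) →₀ K) (hc : c ≠ 0)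
    (hcd : ∀ p ∈ c.support, (p.2.sum fun _ n => n) = d) :
    (⨅ (a : Fin r → K) (_ : a ≠ 0), strength d (∑ i, MvPolynomial.C (a i) * f i)) ≤
      strength d (c.sum fun p t => MvPolynomial.C t * resComponent N ℓ (f p.1) p.2) := by
  classical
  set F := c.sum fun p t => MvPolynomial.C t * resComponent N ℓ (f p.1) p.2 with hF
  obtain ⟨p0, hp0⟩ : c.support.Nonempty := Finsupp.support_nonempty_iff.mpr hc
  set mult : (Fin ℓ →₀ ℕ) → K := fun ε =>
    MvPolynomial.coeff ε ((∑ j : Fin ℓ, X j : MvPolynomial (Fin ℓ) K) ^ d) with hmult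
  set A : MvPolynomial (Fin ℓ) K :=
    ∑ p ∈ c.support, if p.1 = p0.1 then monomial p.2 (c p * mult p.2) else 0 with hA
  have hA0 : MvPolynomial.coeff p0.2 A ≠ 0 := by
    rw [hA, MvPolynomial.coeff_sum]
    rw [Finset.sum_eq_single p0]
    · rw [if_pos rfl, MvPolynomial.coeff_monomial, if_pos rfl]
      exact mul_ne_zero (Finsupp.mem_support_iff.mp hp0)
        (coeff_sum_X_pow_ne_zero _ (hcd p0 hp0))
    · intro p hp hne
      by_cases h1 : p.1 = p0.1
      · rw [if_pos h1, MvPolynomial.coeff_monomial, if_neg]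
        intro h2
        exact hne (Prod.ext h1 h2)
      · rw [if_neg h1, MvPolynomial.coeff_zero]
    · intro h
      exact absurd hp0 h
  have hAne : A ≠ 0 := fun h => hA0 (by rw [h, MvPolynomial.coeff_zero])
  obtain ⟨lam, hlam⟩ : ∃ lam : Fin ℓ → K, MvPolynomial.eval lam A ≠ 0 := by
    by_contra hall
    push_neg at hall
    exact hAne (MvPolynomial.funext fun x => by rw [hall x, map_zero])
  set b : (Fin ℓ →₀ ℕ) → K := fun ε =>
    MvPolynomial.coeff ε ((∑ j : Fin ℓ, MvPolynomial.C (lam j) * X j :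
      MvPolynomial (Fin ℓ) K) ^ d) with hb
  set a : Fin r → K := fun i =>
    ∑ p ∈ c.support, if p.1 = i then c p * b p.2 else 0 with ha
  have hap0 : a p0.1 = MvPolynomial.eval lam A := by
    rw [ha, hA, map_sum]
    refine Finset.sum_congr rfl fun p hp => ?_
    by_cases h1 : p.1 = p0.1
    · rw [if_pos h1, if_pos h1, MvPolynomial.eval_monomial, hb]
      simp only []
      rw [coeff_scaled_pow]
      rw [hmult]
      ring
    · rw [if_neg h1, if_neg h1, map_zero]
  have hane : a ≠ 0 := by
    intro h
    apply hlam
    rw [← hap0, h]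
    rfl
  refine le_trans (iInf_le_of_le a (iInf_le _ hane)) ?_
  have key : (∑ i, MvPolynomial.C (a i) * f i)
      = MvPolynomial.aeval (fun p : Fin ℓ × Fin N =>
          MvPolynomial.C (lam p.1) * X p.2) F := by
    rw [hF, Finsupp.sum, map_sum]
    have hterm : ∀ p ∈ c.support,
        MvPolynomial.aeval (fun q : Fin ℓ × Fin N => MvPolynomial.C (lam q.1) * X q.2)
          (MvPolynomial.C (c p) * resComponent N ℓ (f p.1) p.2)
        = MvPolynomial.C (c p * b p.2) * f p.1 := by
      intro p hp
      rw [map_mul, aeval_C, algebraMap_eq,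
        resComponent_aeval N ℓ d (f p.1) (hf p.1) lam p.2, hb]
      rw [map_mul]
      ring
    rw [Finset.sum_congr rfl hterm]
    have lhs1 : ∀ i, MvPolynomial.C (a i) * f i
        = ∑ p ∈ c.support, (if p.1 = i then MvPolynomial.C (c p * b p.2) * f i else 0) := by
      intro i
      rw [ha]
      simp only []
      rw [map_sum, Finset.sum_mul]
      refine Finset.sum_congr rfl fun p hp => ?_
      by_cases h1 : p.1 = i
      · rw [if_pos h1, if_pos h1]
      · rw [if_neg h1, if_neg h1, map_zero, zero_mul]
    calc (∑ i, MvPolynomial.C (a i) * f i)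
        = ∑ i, ∑ p ∈ c.support,
            (if p.1 = i then MvPolynomial.C (c p * b p.2) * f i else 0) :=
          Finset.sum_congr rfl fun i _ => lhs1 i
      _ = ∑ p ∈ c.support, ∑ i,
            (if p.1 = i then MvPolynomial.C (c p * b p.2) * f i else 0) :=
          Finset.sum_comm
      _ = ∑ p ∈ c.support, MvPolynomial.C (c p * b p.2) * f p.1 := by
          refine Finset.sum_congr rfl fun p hp => ?_
          rw [Finset.sum_ite_eq Finset.univ p.1
            (fun i => MvPolynomial.C (c p * b p.2) * f i), if_pos (Finset.mem_univ _)]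
  rw [key]
  exact strength_aeval_le F _
    (fun p => (MvPolynomial.isHomogeneous_X _ _).C_mul _)
end

section
/- Let K be a field of characteristic 0 and let f^1,...,f^{d-1} be nonzero bihomogeneous forms on K^r × K^r where f^j has bidegree (d-j, j), each of individual strength at least s. Then the collective strength of (f^1,...,f^{d-1}) is at least s/(d-1). -/
open MvPolynomial

/-- The weight function expressing bidegrees on `K^r × K^r`. -/
def biweight (r : ℕ) : Fin r ⊕ Fin r → ℕ × ℕ :=
  Sum.elim (fun _ => ((1 : ℕ), (0 : ℕ))) (fun _ => ((0 : ℕ), (1 : ℕ)))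

section Aux

variable {K : Type*} [CommRing K] {r : ℕ}

lemma biweight_coord_sum (r : ℕ) (x : Fin r ⊕ Fin r) :
    (biweight r x).1 + (biweight r x).2 = 1 := by
  cases x <;> rfl

lemma weight_biweight_add (u : (Fin r ⊕ Fin r) →₀ ℕ) :
    (Finsupp.weight (biweight r) u).1 + (Finsupp.weight (biweight r) u).2
      = Finsupp.weight (1 : (Fin r ⊕ Fin r) → ℕ) u := by
  classical
  simp only [Finsupp.weight_apply, Finsupp.sum]
  rw [Prod.fst_sum, Prod.snd_sum, ← Finset.sum_add_distrib]
  refine Finset.sum_congr rfl fun x _ => ?_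
  have hx := biweight_coord_sum r x
  simp only [Prod.smul_fst, Prod.smul_snd, smul_eq_mul, Pi.one_apply, mul_one]
  rw [← Nat.mul_add, hx, mul_one]

lemma C_mul_isHomogeneous {e : ℕ} {σ : Type*} {p : MvPolynomial σ K} (u : K)
    (hp : p.IsHomogeneous e) : (C u * p).IsHomogeneous e := by
  intro v hv
  apply hp
  rw [coeff_C_mul] at hv
  exact right_ne_zero_of_mul hv

lemma comp_isHomogeneous {e : ℕ} {g : MvPolynomial (Fin r ⊕ Fin r) K}
    (hg : g.IsHomogeneous e) (m : ℕ × ℕ) :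
    (weightedHomogeneousComponent (biweight r) m g).IsHomogeneous e := by
  classical
  intro u hu
  apply hg
  rw [coeff_weightedHomogeneousComponent] at hu
  split_ifs at hu
  · exact hu
  · exact absurd rfl hu

lemma homog_eq_sum_bicomp {e : ℕ} {g : MvPolynomial (Fin r ⊕ Fin r) K}
    (hg : g.IsHomogeneous e) :
    g = ∑ p ∈ Finset.range (e + 1),
      weightedHomogeneousComponent (biweight r) (p, e - p) g := by
  classical
  ext u
  rw [coeff_sum]
  simp only [coeff_weightedHomogeneousComponent]
  by_cases h0 : coeff u g = 0
  · rw [h0]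
    exact (Finset.sum_eq_zero fun p _ => by split_ifs <;> simp [h0]).symm
  · have he : (Finsupp.weight (biweight r) u).1 + (Finsupp.weight (biweight r) u).2 = e := by
      rw [weight_biweight_add]; exact hg h0
    symm
    rw [Finset.sum_eq_single_of_mem ((Finsupp.weight (biweight r) u).1)
      (Finset.mem_range.2 (by omega))]
    · rw [if_pos]
      exact Prod.ext rfl (by omega)
    · intro p hp hne
      rw [if_neg]
      intro hEq
      exact hne (congrArg Prod.fst hEq).symm

lemma comp_mul_eq {dd e a b : ℕ} (hab : a + b = dd) (hed : e ≤ dd)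
    {g h : MvPolynomial (Fin r ⊕ Fin r) K}
    (hg : g.IsHomogeneous e) (hh : h.IsHomogeneous (dd - e)) :
    weightedHomogeneousComponent (biweight r) (a, b) (g * h) =
      ∑ pq ∈ ((Finset.range (e + 1)) ×ˢ (Finset.range (dd - e + 1))).filter
          (fun pq => pq.1 + pq.2 = a),
        weightedHomogeneousComponent (biweight r) (pq.1, e - pq.1) g *
          weightedHomogeneousComponent (biweight r) (pq.2, (dd - e) - pq.2) h := by
  classical
  conv_lhs => rw [homog_eq_sum_bicomp hg, homog_eq_sum_bicomp hh]
  rw [Finset.sum_mul_sum, map_sum, Finset.sum_filter, Finset.sum_product]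
  refine Finset.sum_congr rfl fun p hp => ?_
  rw [map_sum]
  refine Finset.sum_congr rfl fun q hq => ?_
  have hp' : p ≤ e := by simpa using Finset.mem_range.1 hp |>.le |> fun _ => Nat.lt_succ_iff.1 (Finset.mem_range.1 hp)
  have hq' : q ≤ dd - e := Nat.lt_succ_iff.1 (Finset.mem_range.1 hq)
  have hw := (weightedHomogeneousComponent_isWeightedHomogeneous
      (w := biweight r) (p, e - p) g).mul
    (weightedHomogeneousComponent_isWeightedHomogeneous (w := biweight r) ((q, dd - e - q)) h)
  by_cases hpq : p + q = a
  · rw [if_pos hpq]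
    have hidx : ((p, e - p) + (q, dd - e - q) : ℕ × ℕ) = (a, b) := by
      simp only [Prod.mk_add_mk, Prod.mk.injEq]
      omega
    rw [hidx] at hw
    exact hw.weightedHomogeneousComponent_same
  · rw [if_neg hpq]
    refine hw.weightedHomogeneousComponent_ne _ ?_
    simp only [Prod.mk_add_mk, Prod.mk.injEq, ne_eq, not_and]
    intro hfst
    omega

lemma card_filter_le {dd e a b : ℕ} (hd : 3 ≤ dd) (he0 : 0 < e) (hed : e < dd)
    (ha0 : 0 < a) (ha : a < dd) (hab : a + b = dd) :
    (((Finset.range (e + 1)) ×ˢ (Finset.range (dd - e + 1))).filter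
        (fun pq => pq.1 + pq.2 = a)).card ≤ dd - 1 := by
  classical
  have hsub : ((Finset.range (e + 1)) ×ˢ (Finset.range (dd - e + 1))).filter
        (fun pq => pq.1 + pq.2 = a) ⊆
      (Finset.Icc (a - (dd - e)) (min e a)).image (fun p => (p, a - p)) := by
    rintro ⟨p, q⟩ hpq
    simp only [Finset.mem_filter, Finset.mem_product, Finset.mem_range] at hpq
    simp only [Finset.mem_image, Finset.mem_Icc]
    exact ⟨p, ⟨by omega, by omega⟩, by
      refine Prod.ext rfl ?_
      simp only
      omega⟩
  calc (((Finset.range (e + 1)) ×ˢ (Finset.range (dd - e + 1))).filter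
        (fun pq => pq.1 + pq.2 = a)).card
      ≤ ((Finset.Icc (a - (dd - e)) (min e a)).image (fun p => (p, a - p))).card :=
        Finset.card_le_card hsub
    _ ≤ (Finset.Icc (a - (dd - e)) (min e a)).card := Finset.card_image_le
    _ ≤ dd - 1 := by
        rw [Nat.card_Icc]
        rcases le_total e a with h | h
        · rw [min_eq_left h]; omega
        · rw [min_eq_right h]; omega

lemma hasStrengthDecomp_of_finset {σ α : Type*} {d k : ℕ} (hd : 2 ≤ d)
    {f : MvPolynomial σ K} (S : Finset α) (G H : α → MvPolynomial σ K) (E : α → ℕ)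
    (hE : ∀ x ∈ S, 0 < E x ∧ E x < d ∧ (G x).IsHomogeneous (E x) ∧
      (H x).IsHomogeneous (d - E x))
    (hcard : S.card ≤ k) (hf : f = ∑ x ∈ S, G x * H x) : HasStrengthDecomp d f k := by
  classical
  let ι : Fin S.card → α := fun m => (S.equivFin.symm m : α)
  have hι : ∀ m, ι m ∈ S := fun m => (S.equivFin.symm m).2
  let G' : ℕ → MvPolynomial σ K := fun m => if h : m < S.card then G (ι ⟨m, h⟩) else 0
  let H' : ℕ → MvPolynomial σ K := fun m => if h : m < S.card then H (ι ⟨m, h⟩) else 0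
  refine ⟨fun m => G' m, fun m => H' m,
    fun m => if h : (m : ℕ) < S.card then E (ι ⟨m, h⟩) else 1, ?_, ?_⟩
  · intro i
    by_cases h : (i : ℕ) < S.card
    · simp only [G', H', dif_pos h]
      exact hE _ (hι _)
    · simp only [G', H', dif_neg h]
      exact ⟨one_pos, by omega, isHomogeneous_zero _ _ _, isHomogeneous_zero _ _ _⟩
  · rw [hf]
    rw [Fin.sum_univ_eq_sum_range (fun m => G' m * H' m) k]
    rw [← Finset.sum_subset (Finset.range_subset_range.2 hcard)
      (fun m _ hm => by
        simp only [Finset.mem_range, not_lt] at hm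
        simp [G', H', dif_neg (not_lt.2 hm)])]
    rw [Finset.sum_range (fun m => G' m * H' m)]
    rw [← Finset.sum_coe_sort S (fun x => G x * H x)]
    rw [← Equiv.sum_comp S.equivFin.symm (fun x : {x // x ∈ S} => G ↑x * H ↑x)]
    refine Finset.sum_congr rfl fun m _ => ?_
    simp only [G', H', dif_pos m.isLt, Fin.eta, ι]

lemma strength_le_of_decomp {σ : Type*} {d k : ℕ} {f : MvPolynomial σ K}
    (h : HasStrengthDecomp d f k) : strength d f ≤ (k : ℕ∞) :=
  sInf_le ⟨k, rfl, h⟩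

lemma exists_decomp_of_ne_top {σ : Type*} {d : ℕ} {f : MvPolynomial σ K}
    (h : strength d f ≠ ⊤) :
    ∃ k : ℕ, strength d f = (k : ℕ∞) ∧ HasStrengthDecomp d f k := by
  have hne : {s : ℕ∞ | ∃ k : ℕ, s = (k : ℕ∞) ∧ HasStrengthDecomp d f k}.Nonempty := by
    by_contra hemp
    rw [Set.not_nonempty_iff_eq_empty] at hemp
    apply h
    rw [strength, hemp, sInf_empty]
  obtain ⟨k, hk, hdec⟩ := csInf_mem hne
  exact ⟨k, hk, hdec⟩

end Aux

/-- If `f^1, …, f^{d-1}` are nonzero bihomogeneous forms on `K^r × K^r`, `f^j` of bidegree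
`(d-j, j)` and of strength at least `s`, then any nontrivial linear combination has strength
at least `s / (d-1)`; i.e. the collective strength is at least `s / (d-1)`. -/
theorem stmt7 {K : Type*} [Field K] [CharZero K] (r d s : ℕ) (hd : 2 ≤ d)
    (f : Fin (d - 1) → MvPolynomial (Fin r ⊕ Fin r) K)
    (hbh : ∀ j : Fin (d - 1),
      MvPolynomial.IsWeightedHomogeneous (biweight r) (f j) (d - ((j : ℕ) + 1), (j : ℕ) + 1))
    (hne : ∀ j, f j ≠ 0)
    (hstr : ∀ j, (s : ℕ∞) ≤ strength d (f j))
    (c : Fin (d - 1) → K) (hc : c ≠ 0) :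
    (s : ℕ∞) ≤ ((d : ℕ∞) - 1) * strength d (∑ j, MvPolynomial.C (c j) * f j) := by
  classical
  set F : MvPolynomial (Fin r ⊕ Fin r) K := ∑ j, MvPolynomial.C (c j) * f j with hF
  obtain ⟨j, hj'⟩ := Function.ne_iff.mp hc
  have hj : c j ≠ 0 := hj'
  rcases eq_or_ne (strength d F) ⊤ with htop | htop
  · rw [htop]
    have h1 : ((d : ℕ∞) - 1) ≠ 0 := by
      have hcast : ((d - 1 : ℕ) : ℕ∞) = (d : ℕ∞) - 1 := by rw [ENat.coe_sub, Nat.cast_one]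
      rw [← hcast]
      simp only [ne_eq, Nat.cast_eq_zero]
      omega
    rw [ENat.mul_top h1]
    exact le_top
  obtain ⟨k, hk, g, h, e, hprops, hFeq⟩ := exists_decomp_of_ne_top htop
  -- notation for the bidegree of f j
  have hjd : (j : ℕ) + 1 ≤ d - 1 := j.isLt
  -- Step 1 : the bihomogeneous component of F of bidegree (d-(j+1), j+1) is C (c j) * f j
  have hcompF : weightedHomogeneousComponent (biweight r)
      (d - ((j : ℕ) + 1), (j : ℕ) + 1) F = MvPolynomial.C (c j) * f j := by
    rw [hF, map_sum]
    rw [Finset.sum_eq_single j]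
    · rw [weightedHomogeneousComponent_C_mul,
        (hbh j).weightedHomogeneousComponent_same]
    · intro j' _ hj'
      rw [weightedHomogeneousComponent_C_mul,
        (hbh j').weightedHomogeneousComponent_ne _
          (by
            simp only [ne_eq, Prod.mk.injEq, not_and]
            intro _ hsnd
            exact hj' (Fin.ext (by omega)))]
      rw [mul_zero]
    · simp
  have hfj : f j = MvPolynomial.C (c j)⁻¹ *
      weightedHomogeneousComponent (biweight r) (d - ((j : ℕ) + 1), (j : ℕ) + 1) F := by
    rw [hcompF, ← mul_assoc, ← C_mul, inv_mul_cancel₀ hj, C_1, one_mul]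
  have key : HasStrengthDecomp d (f j) ((d - 1) * k) := by
    rcases eq_or_lt_of_le hd with hd2 | hd3
    · -- d = 2 : then F = C (c j) * f j and we can reuse the decomposition of F directly
      have huniv : (Finset.univ : Finset (Fin (d - 1))) = {j} := by
        apply Finset.eq_singleton_iff_unique_mem.2
        refine ⟨Finset.mem_univ _, fun x _ => Fin.ext ?_⟩
        have := x.isLt
        have := j.isLt
        omega
      have hFj : F = MvPolynomial.C (c j) * f j := by rw [hF, huniv, Finset.sum_singleton]
      have : f j = ∑ i : Fin k, (MvPolynomial.C (c j)⁻¹ * g i) * h i := by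
        calc f j = MvPolynomial.C (c j)⁻¹ * F := by
              rw [hFj, ← mul_assoc, ← C_mul, inv_mul_cancel₀ hj, C_1, one_mul]
          _ = ∑ i : Fin k, (MvPolynomial.C (c j)⁻¹ * g i) * h i := by
              rw [hFeq, Finset.mul_sum]
              exact Finset.sum_congr rfl fun i _ => by ring
      rw [show d - 1 = 1 by omega, one_mul]
      exact ⟨fun i => MvPolynomial.C (c j)⁻¹ * g i, h, e,
        fun i => ⟨(hprops i).1, (hprops i).2.1,
          C_mul_isHomogeneous _ (hprops i).2.2.1, (hprops i).2.2.2⟩, this⟩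
    · -- d ≥ 3 : use bihomogeneous components of products
      set a : ℕ := d - ((j : ℕ) + 1) with ha
      set b : ℕ := (j : ℕ) + 1 with hb
      have hab : a + b = d := by omega
      have hTi : ∀ i : Fin k,
          weightedHomogeneousComponent (biweight r) (a, b) (g i * h i) =
          ∑ pq ∈ ((Finset.range (e i + 1)) ×ˢ (Finset.range (d - e i + 1))).filter
              (fun pq => pq.1 + pq.2 = a),
            weightedHomogeneousComponent (biweight r) (pq.1, e i - pq.1) (g i) *
              weightedHomogeneousComponent (biweight r) (pq.2, (d - e i) - pq.2) (h i) :=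
        fun i => comp_mul_eq hab (le_of_lt (hprops i).2.1) (hprops i).2.2.1 (hprops i).2.2.2
      -- f j as a sum over a sigma-type finset
      set T : Fin k → Finset (ℕ × ℕ) := fun i =>
        ((Finset.range (e i + 1)) ×ˢ (Finset.range (d - e i + 1))).filter
          (fun pq => pq.1 + pq.2 = a) with hT
      have hfj2 : f j = ∑ x ∈ (Finset.univ : Finset (Fin k)).sigma T,
          (MvPolynomial.C (c j)⁻¹ *
            weightedHomogeneousComponent (biweight r) (x.2.1, e x.1 - x.2.1) (g x.1)) *
          weightedHomogeneousComponent (biweight r) (x.2.2, (d - e x.1) - x.2.2) (h x.1) := by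
        rw [hfj, hFeq, map_sum]
        rw [Finset.mul_sum, Finset.sum_sigma]
        refine Finset.sum_congr rfl fun i _ => ?_
        rw [hTi i, Finset.mul_sum]
        exact Finset.sum_congr rfl fun pq _ => by ring
      refine hasStrengthDecomp_of_finset hd _ _ _ (fun x : Σ _ : Fin k, ℕ × ℕ => e x.1)
        ?_ ?_ hfj2
      · intro x _
        exact ⟨(hprops x.1).1, (hprops x.1).2.1,
          C_mul_isHomogeneous _ (comp_isHomogeneous (hprops x.1).2.2.1 _),
          comp_isHomogeneous (hprops x.1).2.2.2 _⟩
      · rw [Finset.card_sigma]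
        calc ∑ i : Fin k, (T i).card ≤ ∑ _i : Fin k, (d - 1) :=
              Finset.sum_le_sum fun i _ => by
                refine card_filter_le (by omega) (hprops i).1 (hprops i).2.1 ?_ ?_ hab
                · omega
                · omega
          _ = k * (d - 1) := by rw [Finset.sum_const, Finset.card_univ, Fintype.card_fin,
                smul_eq_mul]
          _ ≤ (d - 1) * k := by rw [Nat.mul_comm]
  calc (s : ℕ∞) ≤ strength d (f j) := hstr j
    _ ≤ (((d - 1) * k : ℕ) : ℕ∞) := strength_le_of_decomp key
    _ = ((d : ℕ∞) - 1) * (k : ℕ∞) := by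
        rw [Nat.cast_mul, ENat.coe_sub, Nat.cast_one]
    _ = ((d : ℕ∞) - 1) * strength d F := by rw [hk]
end

section
/- Let K be a Birch field of characteristic 0, d ≥ 1 odd, and suppose Theorem 'main' holds (Zariski density of K-points for single forms of degree d of strength ≥ C(d)). Then there is a constant C'(d) such that any equation a₁x₁^d + ... + aₙxₙ^d = 1 with all a_i ∈ K nonzero and n ≥ C'(d) has a solution in Kⁿ. -/
open MvPolynomial

open Finsupp Submodule

lemma homogComp_mul {L : Type*} [CommRing L] {σ : Type*} {P : MvPolynomial σ L} {e : ℕ}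
    (hP : P.IsHomogeneous e) (a : ℕ) (w : MvPolynomial σ L) :
    homogeneousComponent (a + e) (w * P) = homogeneousComponent a w * P := by
  induction w using MvPolynomial.induction_on' with
  | add p q hp hq => rw [add_mul, map_add, hp, hq, map_add, add_mul]
  | monomial δ c =>
    have hmon : (monomial δ c : MvPolynomial σ L).IsHomogeneous δ.degree :=
      isHomogeneous_monomial _ rfl
    have hprod : ((monomial δ c : MvPolynomial σ L) * P).IsHomogeneous (δ.degree + e) :=
      hmon.mul hP
    rw [homogeneousComponent_of_mem ((mem_homogeneousSubmodule _ _).mpr hprod),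
      homogeneousComponent_of_mem ((mem_homogeneousSubmodule _ _).mpr hmon)]
    by_cases hδ : a = δ.degree
    · rw [if_pos (by rw [hδ]), if_pos hδ]
    · rw [if_neg (by omega), if_neg hδ, zero_mul]

lemma key_core {L : Type*} [Field L] [IsAlgClosed L] [CharZero L]
    {m d k : ℕ} (hdm : d ≤ m) (hd2 : 2 ≤ d)
    (c : Fin m → L) (hc : ∀ i, c i ≠ 0)
    (g h : Fin k → MvPolynomial (Fin m) L) (e : Fin k → ℕ)
    (he : ∀ i, 0 < e i ∧ e i < d ∧ (g i).IsHomogeneous (e i) ∧ (h i).IsHomogeneous (d - e i))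
    (hf : (∑ i, MvPolynomial.C (c i) * X i ^ d : MvPolynomial (Fin m) L) = ∑ i, g i * h i) :
    m ≤ 2 * k := by
  by_contra hlt
  push_neg at hlt
  -- the 2k forms
  let ι := Fin k ⊕ Fin k
  let P : ι → MvPolynomial (Fin m) L := Sum.elim g h
  let Dg : ι → ℕ := Sum.elim e (fun i => d - e i)
  have hP : ∀ i, (P i).IsHomogeneous (Dg i) := by
    rintro (i | i)
    · exact (he i).2.2.1
    · exact (he i).2.2.2
  have hDg1 : ∀ i, 1 ≤ Dg i := by
    rintro (i | i)
    · exact (he i).1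
    · have := (he i).2.1; simp only [Dg, Sum.elim_inr]; omega
  have hDgd : ∀ i, Dg i ≤ d - 1 := by
    rintro (i | i)
    · have := (he i).2.1; simp only [Dg, Sum.elim_inl]; omega
    · have := (he i).1; simp only [Dg, Sum.elim_inr]; omega
  let I : Ideal (MvPolynomial (Fin m) L) := Ideal.span (Set.range P)
  -- Step 1 : only the origin is a common zero
  have hzero : ∀ x ∈ zeroLocus L I, x = 0 := by
    intro x hx
    have hPx : ∀ i, eval x (P i) = 0 := fun i =>
      hx _ (Ideal.subset_span (Set.mem_range_self i))
    funext j
    have h1 := congrArg (fun p => eval x (pderiv j p)) hf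
    simp only [map_sum, pderiv_mul, pderiv_C_mul, pderiv_pow, map_add, map_mul] at h1
    have hR : (∑ i, (eval x (pderiv j (g i)) * eval x (h i) +
        eval x (g i) * eval x (pderiv j (h i)))) = 0 := by
      apply Finset.sum_eq_zero
      intro i _
      have hg0 : eval x (g i) = 0 := hPx (Sum.inl i)
      have hh0 : eval x (h i) = 0 := hPx (Sum.inr i)
      rw [hg0, hh0, mul_zero, zero_mul, add_zero]
    rw [hR] at h1
    have hL : (∑ i, c i * ((d : L) * x i ^ (d - 1) * eval x (pderiv j (X i)))) = 0 := by
      simpa using h1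
    rw [Finset.sum_eq_single j] at hL
    · simp only [pderiv_X_self, map_one, mul_one] at hL
      have hd0 : (d : L) ≠ 0 := Nat.cast_ne_zero.mpr (by omega)
      have h2 := (mul_eq_zero.mp hL).resolve_left (hc j)
      have h3 := (mul_eq_zero.mp h2).resolve_left hd0
      exact pow_eq_zero_iff (by omega : d - 1 ≠ 0) |>.mp h3
    · intro i _ hij
      rw [pderiv_X, Pi.single_eq_of_ne hij]
      simp
    · intro hj; exact absurd (Finset.mem_univ j) hj
  -- Step 2 : some power of each variable lies in I
  have hrad : ∀ j : Fin m, ∃ nj : ℕ, (X j : MvPolynomial (Fin m) L) ^ nj ∈ I := by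
    intro j
    have hXj : (X j : MvPolynomial (Fin m) L) ∈ vanishingIdeal L (zeroLocus L I) := by
      rw [mem_vanishingIdeal_iff]
      intro x hx
      rw [hzero x hx]
      simp
    rw [vanishingIdeal_zeroLocus_eq_radical] at hXj
    exact Ideal.mem_radical_iff.mp hXj
  choose nj hnj using hrad
  set N : ℕ := (Finset.univ.sup nj) + 1 with hN
  have hN1 : 1 ≤ N := by omega
  have hXN : ∀ j : Fin m, (X j : MvPolynomial (Fin m) L) ^ N ∈ I := by
    intro j
    have hle : nj j ≤ N := le_trans (Finset.le_sup (Finset.mem_univ j)) (by omega)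
    have : (X j : MvPolynomial (Fin m) L) ^ N
        = (X j) ^ (nj j) * (X j) ^ (N - nj j) := by
      rw [← pow_add]; congr 1; omega
    rw [this]
    exact I.mul_mem_right _ (hnj j)
  set D : ℕ := m * N with hD
  have hdD : d - 1 ≤ D := by
    have h1 : m ≤ m * N := Nat.le_mul_of_pos_right m (by omega)
    omega
  -- spanning sets
  let T : ℕ → Set (MvPolynomial (Fin m) L) := fun n =>
    {q | ∃ (α : ι → ℕ) (γ : Fin m →₀ ℕ), (∑ i, α i) ≤ n ∧ γ.degree ≤ D ∧
      q = (∏ i, P i ^ α i) * monomial γ 1}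
  have hTmono : ∀ {n n' : ℕ}, n ≤ n' → T n ⊆ T n' := by
    intro n n' hnn q ⟨α, γ, h1, h2, h3⟩
    exact ⟨α, γ, le_trans h1 hnn, h2, h3⟩
  have hTmul : ∀ (n : ℕ) (i₀ : ι), ∀ q ∈ span L (T n), q * P i₀ ∈ span L (T (n + 1)) := by
    intro n i₀ q hq
    induction hq using span_induction with
    | mem q hq =>
      obtain ⟨α, γ, h1, h2, rfl⟩ := hq
      apply subset_span
      refine ⟨fun i => α i + (if i = i₀ then 1 else 0), γ, ?_, h2, ?_⟩
      · rw [Finset.sum_add_distrib, Finset.sum_ite_eq' Finset.univ i₀ (fun _ => 1)]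
        simp only [Finset.mem_univ, if_pos]
        omega
      · rw [mul_right_comm]
        congr 1
        simp_rw [pow_add]
        rw [Finset.prod_mul_distrib]
        congr 1
        have hpow : ∀ x : ι, P x ^ (if x = i₀ then 1 else 0) = if x = i₀ then P x else 1 := by
          intro x; split <;> simp
        rw [Finset.prod_congr rfl (fun x _ => hpow x), Finset.prod_ite_eq' Finset.univ i₀ P]
        simp
    | zero => rw [zero_mul]; exact zero_mem _
    | add a b _ _ ha hb => rw [add_mul]; exact add_mem ha hb
    | smul r a _ ha => rw [smul_mul_assoc]; exact smul_mem _ r ha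
  -- Key spanning lemma
  have hKey : ∀ (n : ℕ) (β : Fin m →₀ ℕ), β.degree ≤ n →
      (monomial β 1 : MvPolynomial (Fin m) L) ∈ span L (T n) := by
    intro n
    induction n using Nat.strong_induction_on with
    | _ n IH =>
      intro β hβ
      by_cases hDβ : β.degree ≤ D
      · exact subset_span ⟨fun _ => 0, β, by simp, hDβ, by simp⟩
      · push_neg at hDβ
        -- pigeonhole
        have hj : ∃ j, N ≤ β j := by
          by_contra hno
          push_neg at hno
          have hsum : β.degree ≤ (Finset.univ : Finset (Fin m)).card • (N - 1) := by
            rw [Finsupp.degree]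
            calc ∑ i ∈ β.support, β i ≤ ∑ i : Fin m, β i :=
                  Finset.sum_le_sum_of_subset (Finset.subset_univ _)
              _ ≤ _ := Finset.sum_le_card_nsmul _ _ _ (fun i _ => by have := hno i; omega)
          simp only [Finset.card_univ, Fintype.card_fin, smul_eq_mul] at hsum
          have hmN : m * (N - 1) + m = m * N := by
            conv_rhs => rw [← Nat.sub_add_cancel hN1]
            rw [Nat.mul_succ]
          have hm1 : 1 ≤ m := by omega
          omega
        obtain ⟨j, hj⟩ := hj
        set β' : Fin m →₀ ℕ := β - Finsupp.single j N with hβ'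
        have hβdec : β' + Finsupp.single j N = β := by
          rw [hβ']
          ext i
          simp only [Finsupp.add_apply, Finsupp.tsub_apply, Finsupp.single_apply]
          by_cases hij : j = i
          · subst hij; simp; omega
          · simp [hij]
        have hmono : (monomial β 1 : MvPolynomial (Fin m) L)
            = monomial β' 1 * X j ^ N := by
          rw [X_pow_eq_monomial, monomial_mul, mul_one, hβdec]
        obtain ⟨u, hu⟩ := (mem_span_range_iff_exists_fun (MvPolynomial (Fin m) L)).mp (hXN j)
        have expand : (monomial β 1 : MvPolynomial (Fin m) L)
            = ∑ i, (monomial β' 1 * u i) * P i := by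
          rw [hmono, ← hu, Finset.mul_sum]
          apply Finset.sum_congr rfl
          intro i _
          rw [smul_eq_mul, mul_assoc]
        -- take homogeneous components of degree β.degree
        have hcomp := congrArg (homogeneousComponent β.degree) expand
        rw [homogeneousComponent_of_mem
          ((mem_homogeneousSubmodule _ _).mpr (isHomogeneous_monomial 1 rfl)), if_pos rfl,
          map_sum] at hcomp
        have hterm : ∀ i : ι, homogeneousComponent β.degree ((monomial β' 1 * u i) * P i)
            = homogeneousComponent (β.degree - Dg i) (monomial β' 1 * u i) * P i := by
          intro i
          have hsplit : β.degree = (β.degree - Dg i) + Dg i := by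
            have h1 := hDgd i
            omega
          conv_lhs => rw [hsplit]
          rw [homogComp_mul (hP i)]
        rw [hcomp]
        apply Submodule.sum_mem
        intro i _
        rw [hterm i]
        -- each factor is in the span of T (β.degree - Dg i)
        have hvi : homogeneousComponent (β.degree - Dg i) (monomial β' 1 * u i)
            ∈ span L (T (β.degree - Dg i)) := by
          set v := homogeneousComponent (β.degree - Dg i) (monomial β' 1 * u i) with hv
          rw [← support_sum_monomial_coeff v]
          apply Submodule.sum_mem
          intro τ hτ
          have hτdeg : τ.degree = β.degree - Dg i := by
            by_contra hne
            have := coeff_homogeneousComponent (β.degree - Dg i)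
              (monomial β' 1 * u i) τ
            rw [if_neg hne] at this
            rw [MvPolynomial.mem_support_iff] at hτ
            exact hτ (by rw [hv, this])
          have : (monomial τ (coeff τ v) : MvPolynomial (Fin m) L)
              = coeff τ v • monomial τ 1 := by rw [smul_monomial, smul_eq_mul, mul_one]
          rw [this]
          apply Submodule.smul_mem
          have hlt' : β.degree - Dg i < n := by
            have := hDg1 i
            omega
          exact IH _ hlt' _ (le_of_eq hτdeg)
        have := hTmul _ i _ hvi
        have hle : (β.degree - Dg i) + 1 ≤ n := by
          have := hDg1 i; omega
        exact span_mono (hTmono hle) this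
  -- Step 4 : counting dimensions
  classical
  set n₁ : ℕ := m ^ (k + k) * (D + 1) ^ m with hn₁
  set n₀ : ℕ := m * n₁ with hn₀
  let toF : (Fin m → ℕ) → (Fin m →₀ ℕ) := fun q => Finsupp.equivFunOnFinite.symm q
  have hdeg0 : ∀ f : Fin m → ℕ, (toF f).degree = ∑ i, f i := by
    intro f
    rw [Finsupp.degree_apply, Finset.sum_subset (Finset.subset_univ _)
      (fun x _ hx => Finsupp.notMem_support_iff.mp hx)]
    exact Finset.sum_congr rfl (fun i _ => by simp [toF])
  let v : (Fin m → Fin (n₁ + 1)) → MvPolynomial (Fin m) L :=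
    fun q => monomial (toF (fun i => (q i : ℕ))) 1
  let A := (ι → Fin (n₀ + 1)) × (Fin m → Fin (D + 1))
  let w : A → MvPolynomial (Fin m) L :=
    fun p => (∏ i, P i ^ ((p.1 i : ℕ))) * monomial (toF (fun i => (p.2 i : ℕ))) 1
  have hm1 : 1 ≤ m := by omega
  have hsub : T n₀ ⊆ Set.range w := by
    rintro x ⟨α, γ, h1, h2, rfl⟩
    have hα : ∀ i, α i < n₀ + 1 := by
      intro i
      have : α i ≤ ∑ i, α i :=
        Finset.single_le_sum (f := α) (fun i _ => Nat.zero_le _) (Finset.mem_univ i)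
      omega
    have hγ : ∀ i, γ i < D + 1 := by
      intro i
      have := Finsupp.le_degree i γ
      omega
    refine ⟨(fun i => ⟨α i, hα i⟩, fun i => ⟨γ i, hγ i⟩), ?_⟩
    simp only [w]
    have hγ2 : toF (fun i => γ i) = γ := by ext i; simp [toF]
    rw [hγ2]
  have hvw : ∀ q, v q ∈ span L (Set.range w) := by
    intro q
    have hd1 : (toF (fun i => ((q i : ℕ)))).degree ≤ n₀ := by
      rw [hdeg0]
      calc ∑ i : Fin m, ((q i : ℕ)) ≤ (Finset.univ : Finset (Fin m)).card • n₁ :=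
            Finset.sum_le_card_nsmul _ _ _ (fun i _ => Fin.is_le _)
        _ = n₀ := by simp [hn₀]
    exact span_mono hsub (hKey n₀ _ hd1)
  have hv_li : LinearIndependent L v := by
    have hinj : Function.Injective (fun q : Fin m → Fin (n₁ + 1) => toF (fun i => ((q i : ℕ)))) := by
      intro q q' hqq
      funext i
      have h2 : ((q i : ℕ)) = ((q' i : ℕ)) := by
        have h3 := congrArg (fun f => f i) hqq
        simpa [toF] using h3
      exact Fin.val_injective h2
    have h4 := (basisMonomials (Fin m) L).linearIndependent.comp _ hinj
    have h5 : v = (basisMonomials (Fin m) L) ∘ (fun q : Fin m → Fin (n₁ + 1) => toF (fun i => ((q i : ℕ)))) := by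
      funext q
      simp [v, coe_basisMonomials]
    rw [h5]
    exact h4
  have hfin : FiniteDimensional L (span L (Set.range w)) :=
    FiniteDimensional.span_of_finite L (Set.finite_range w)
  have hcard : Fintype.card (Fin m → Fin (n₁ + 1)) ≤ Fintype.card A := by
    have h1 : Fintype.card (Fin m → Fin (n₁ + 1))
        ≤ Module.finrank L (span L (Set.range w)) := by
      have hv' : LinearIndependent L
          (fun q => (⟨v q, hvw q⟩ : span L (Set.range w))) := by
        apply LinearIndependent.of_comp (span L (Set.range w)).subtype
        exact hv_li
      exact hv'.fintype_card_le_finrank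
    have h2 : Module.finrank L (span L (Set.range w)) ≤ Fintype.card A := by
      refine le_trans (finrank_span_le_card (R := L) (Set.range w)) ?_
      rw [Set.toFinset_range]
      exact le_trans Finset.card_image_le (by simp)
    omega
  rw [Fintype.card_fun, Fintype.card_prod, Fintype.card_fun, Fintype.card_fun] at hcard
  simp only [Fintype.card_fin, Fintype.card_sum, ι] at hcard
  -- hcard : (n₁+1)^m ≤ (n₀+1)^(k+k) * (D+1)^m
  have e1 : n₀ + 1 ≤ m * (n₁ + 1) := by rw [Nat.mul_succ]; omega
  have e2 : k + k ≤ m - 1 := by omega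
  have hcontra : (n₁ + 1) ^ m < (n₁ + 1) ^ m := by
    calc (n₁ + 1) ^ m ≤ (n₀ + 1) ^ (k + k) * (D + 1) ^ m := hcard
      _ ≤ (m * (n₁ + 1)) ^ (k + k) * (D + 1) ^ m := by
          exact Nat.mul_le_mul_right _ (Nat.pow_le_pow_left e1 _)
      _ = m ^ (k + k) * (n₁ + 1) ^ (k + k) * (D + 1) ^ m := by rw [mul_pow]
      _ ≤ m ^ (k + k) * (n₁ + 1) ^ (m - 1) * (D + 1) ^ m := by
          refine Nat.mul_le_mul_right _ (Nat.mul_le_mul_left _ ?_)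
          exact Nat.pow_le_pow_right (by omega) e2
      _ = (m ^ (k + k) * (D + 1) ^ m) * (n₁ + 1) ^ (m - 1) := by ring
      _ = n₁ * (n₁ + 1) ^ (m - 1) := by rw [hn₁]
      _ < (n₁ + 1) * (n₁ + 1) ^ (m - 1) := by
          have hpos : 0 < (n₁ + 1) ^ (m - 1) := Nat.pow_pos (by omega)
          exact Nat.mul_lt_mul_of_lt_of_le (Nat.lt_succ_self _) (le_refl _) hpos
      _ = (n₁ + 1) ^ m := by
          rw [← pow_succ']
          congr 1
          omega
  exact lt_irrefl _ hcontra

-- strength bound for diagonal forms over K (char 0)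
lemma diag_strength {K : Type*} [Field K] [CharZero K] {m d k : ℕ}
    (hd1 : 1 ≤ d) (hdm : d ≤ m)
    (c : Fin m → K) (hc : ∀ i, c i ≠ 0)
    (hdec : HasStrengthDecomp d (∑ i, MvPolynomial.C (c i) * X i ^ d) k) :
    m ≤ 2 * k := by
  obtain ⟨g, h, e, he, hf⟩ := hdec
  -- rule out k = 0
  rcases Nat.eq_zero_or_pos k with rfl | hk
  · exfalso
    have hm0 : 0 < m := by omega
    set i₀ : Fin m := ⟨0, hm0⟩
    rw [show (∑ i : Fin 0, g i * h i) = 0 from by simp] at hf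
    have h0 := congrArg (MvPolynomial.eval (Pi.single i₀ (1 : K))) hf
    rw [map_zero, map_sum, Finset.sum_eq_single i₀] at h0
    · simp only [map_mul, eval_C, map_pow, eval_X, Pi.single_eq_same, one_pow, mul_one] at h0
      exact hc i₀ h0
    · intro b _ hb
      simp [Pi.single_eq_of_ne hb, zero_pow (by omega : d ≠ 0)]
    · simp
  have hd2 : 2 ≤ d := by
    have h0 := he ⟨0, hk⟩
    omega
  -- pass to the algebraic closure
  set L := AlgebraicClosure K
  let φ : MvPolynomial (Fin m) K →+* MvPolynomial (Fin m) L :=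
    MvPolynomial.map (algebraMap K L)
  have halg : Function.Injective (algebraMap K L) := (algebraMap K L).injective
  have hc' : ∀ i, algebraMap K L (c i) ≠ 0 := by
    intro i h0
    exact hc i (by simpa using halg (by simpa using h0))
  have hf' : (∑ i, MvPolynomial.C (algebraMap K L (c i)) * X i ^ d :
      MvPolynomial (Fin m) L) = ∑ i, (fun j => φ (g j)) i * (fun j => φ (h j)) i := by
    have := congrArg φ hf
    simpa [φ, map_sum] using this
  exact key_core hdm hd2 _ hc' _ _ e
    (fun i => ⟨(he i).1, (he i).2.1, ((he i).2.2.1).map _, ((he i).2.2.2).map _⟩) hf'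


/-- If `K` is a Birch field of characteristic `0` and the main theorem holds for degree-`d`
forms (Zariski density of `K`-points for single degree-`d` forms of strength at least some
constant `C`), then there is `C'` such that every equation `a₁x₁^d + ⋯ + aₙxₙ^d = 1` with
all `a_i ≠ 0` and `n ≥ C'` has a solution in `K`. -/
theorem stmt12 {K : Type*} [Field K] [CharZero K]
    (hBirch : ∀ e : ℕ, Odd e → ∃ N : ℕ, ∀ n, N ≤ n → DiagSolvable K e n)
    (d : ℕ) (hd : Odd d)
    (hmain : ∃ C : ℕ, ∀ (m : ℕ) (f : MvPolynomial (Fin m) K), f.IsHomogeneous d →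
      (C : ℕ∞) ≤ strength d f →
      ∀ g : MvPolynomial (Fin m) K,
        (∃ y : Fin m → AlgebraicClosure K,
          MvPolynomial.eval y (MvPolynomial.map (algebraMap K (AlgebraicClosure K)) f) = 0 ∧
          MvPolynomial.eval y (MvPolynomial.map (algebraMap K (AlgebraicClosure K)) g) ≠ 0) →
        ∃ x : Fin m → K, MvPolynomial.eval x f = 0 ∧ MvPolynomial.eval x g ≠ 0) :
    ∃ C' : ℕ, ∀ n, C' ≤ n → ∀ a : Fin n → K, (∀ i, a i ≠ 0) →
      ∃ x : Fin n → K, ∑ i, a i * x i ^ d = 1 := by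
  classical
  obtain ⟨Cst, hmain⟩ := hmain
  refine ⟨2 * Cst + d + 2, fun n hn a ha => ?_⟩
  have hd1 : 1 ≤ d := hd.pos
  set L := AlgebraicClosure K with hLdef
  -- the diagonal form in n+1 variables
  set c : Fin (n + 1) → K := Fin.snoc a (-1) with hcdef
  have hc : ∀ i, c i ≠ 0 := by
    intro i
    induction i using Fin.lastCases with
    | last => rw [hcdef]; simp only [Fin.snoc_last]; exact neg_ne_zero.mpr one_ne_zero
    | cast j => rw [hcdef]; simp only [Fin.snoc_castSucc]; exact ha j
  set f : MvPolynomial (Fin (n + 1)) K := ∑ i, MvPolynomial.C (c i) * X i ^ d with hfdef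
  -- generic evaluation of the diagonal form
  have heval : ∀ (z : Fin (n + 1) → K), MvPolynomial.eval z f
      = (∑ i : Fin n, a i * z i.castSucc ^ d) + (-1) * z (Fin.last n) ^ d := by
    intro z
    rw [hfdef, map_sum]
    have : ∀ i : Fin (n + 1), MvPolynomial.eval z (MvPolynomial.C (c i) * X i ^ d)
        = c i * z i ^ d := by intro i; simp
    rw [Finset.sum_congr rfl (fun i _ => this i), Fin.sum_univ_castSucc]
    simp [hcdef]
  have hfhom : f.IsHomogeneous d := by
    rw [hfdef]
    apply IsHomogeneous.sum
    intro i _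
    exact isHomogeneous_C_mul_X_pow _ _ _
  have hstr : (Cst : ℕ∞) ≤ strength d f := by
    apply le_sInf
    rintro s ⟨k, rfl, hdec⟩
    rw [Nat.cast_le]
    have := diag_strength hd1 (by omega : d ≤ n + 1) c hc (by rw [← hfdef]; exact hdec)
    omega
  -- a witness over the algebraic closure
  have hn1 : 0 < n := by omega
  set i₀ : Fin n := ⟨0, hn1⟩
  have ha0 : algebraMap K L (a i₀) ≠ 0 := by
    intro h0
    exact ha i₀ ((algebraMap K L).injective (by simpa using h0))
  obtain ⟨t, ht⟩ := IsAlgClosed.exists_pow_nat_eq ((algebraMap K L (a i₀))⁻¹)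
    (show 0 < d by omega)
  set y : Fin (n + 1) → L := Fin.snoc (fun i : Fin n => if i = i₀ then t else 0) 1 with hydef
  have hy1 : MvPolynomial.eval y (MvPolynomial.map (algebraMap K L) f) = 0 := by
    rw [hfdef, map_sum, map_sum]
    have : ∀ i : Fin (n + 1), MvPolynomial.eval y
        (MvPolynomial.map (algebraMap K L) (MvPolynomial.C (c i) * X i ^ d))
        = algebraMap K L (c i) * y i ^ d := by
      intro i; simp
    rw [Finset.sum_congr rfl (fun i _ => this i), Fin.sum_univ_castSucc]
    simp only [hydef, Fin.snoc_castSucc, Fin.snoc_last, hcdef, one_pow]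
    rw [Finset.sum_eq_single i₀]
    · rw [if_pos rfl, ht]
      simp [mul_inv_cancel₀ ha0]
    · intro b _ hb
      rw [if_neg hb, zero_pow (by omega : d ≠ 0), mul_zero]
    · simp
  have hy2 : MvPolynomial.eval y (MvPolynomial.map (algebraMap K L)
      (X (Fin.last n) : MvPolynomial (Fin (n + 1)) K)) ≠ 0 := by
    rw [MvPolynomial.map_X, eval_X, hydef, Fin.snoc_last]
    exact one_ne_zero
  obtain ⟨x, hx0, hxg⟩ := hmain (n + 1) f hfhom hstr (X (Fin.last n)) ⟨y, hy1, hy2⟩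
  have hxl : x (Fin.last n) ≠ 0 := by
    rw [eval_X] at hxg
    exact hxg
  refine ⟨fun i => x i.castSucc / x (Fin.last n), ?_⟩
  rw [heval] at hx0
  have hsum : (∑ i : Fin n, a i * x i.castSucc ^ d) = x (Fin.last n) ^ d := by
    linear_combination hx0
  have hxld : x (Fin.last n) ^ d ≠ 0 := pow_ne_zero _ hxl
  calc ∑ i : Fin n, a i * (x i.castSucc / x (Fin.last n)) ^ d
      = ∑ i : Fin n, (a i * x i.castSucc ^ d) / x (Fin.last n) ^ d := by
        apply Finset.sum_congr rfl
        intro i _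
        rw [div_pow, mul_div_assoc]
    _ = (∑ i : Fin n, a i * x i.castSucc ^ d) / x (Fin.last n) ^ d := by
        rw [Finset.sum_div]
    _ = 1 := by rw [hsum, div_self hxld]
end

section
/- Let d ≥ 1 be odd and a₁,...,aₙ nonzero elements of Kⁿ over a field K of characteristic 0. The form f = a₁x₁^d + ... + aₙxₙ^d − x_{n+1}^d on K^{n+1} has strength at least (n+1)/2. -/
open MvPolynomial

-- ===== auxiliary lemmas =====

set_option linter.unusedSectionVars false
set_option linter.unusedVariables false


lemma homogComp_mul_homog {K : Type*} [CommRing K] {σ : Type*}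
    {q : MvPolynomial σ K} {e : ℕ} (hq : q.IsHomogeneous e) (f : MvPolynomial σ K) {D : ℕ}
    (he : e ≤ D) :
    homogeneousComponent D (f * q) = homogeneousComponent (D - e) f * q := by
  conv_lhs => rw [← sum_homogeneousComponent f, Finset.sum_mul, map_sum]
  have key : ∀ i, homogeneousComponent D (homogeneousComponent i f * q)
      = if i = D - e then homogeneousComponent i f * q else 0 := by
    intro i
    have hmem : homogeneousComponent i f * q ∈ homogeneousSubmodule σ K (i + e) :=
      (homogeneousComponent_isHomogeneous i f).mul hq
    by_cases h : i = D - e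
    · rw [homogeneousComponent_of_mem hmem, if_pos (by omega), if_pos h]
    · rw [homogeneousComponent_of_mem hmem, if_neg (by omega), if_neg h]
  rw [Finset.sum_congr rfl fun i _ => key i, Finset.sum_ite_eq' (Finset.range (f.totalDegree + 1))]
  by_cases h : D - e ∈ Finset.range (f.totalDegree + 1)
  · rw [if_pos h]
  · rw [if_neg h, homogeneousComponent_eq_zero, zero_mul]
    simp only [Finset.mem_range] at h; omega

lemma exists_homog_decomp {K : Type*} [CommRing K] {σ : Type*} {m : ℕ}
    (q : Fin m → MvPolynomial σ K) (dq : Fin m → ℕ)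
    (hq : ∀ j, (q j).IsHomogeneous (dq j)) {p : MvPolynomial σ K} {D : ℕ}
    (hp : p.IsHomogeneous D) (hdq : ∀ j, dq j ≤ D)
    (hmem : p ∈ Ideal.span (Set.range q)) :
    ∃ f : Fin m → MvPolynomial σ K,
      (∀ j, (f j).IsHomogeneous (D - dq j)) ∧ p = ∑ j, f j * q j := by
  obtain ⟨f, hf⟩ := Ideal.mem_span_range_iff_exists_fun.mp hmem
  refine ⟨fun j => homogeneousComponent (D - dq j) (f j),
    fun j => homogeneousComponent_isHomogeneous _ _, ?_⟩
  calc p = homogeneousComponent D p := by rw [homogeneousComponent_of_mem hp, if_pos rfl]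
    _ = homogeneousComponent D (∑ j, f j * q j) := by rw [hf]
    _ = ∑ j, homogeneousComponent (D - dq j) (f j) * q j := by
        rw [map_sum]
        exact Finset.sum_congr rfl fun j _ => homogComp_mul_homog (hq j) (f j) (hdq j)

lemma degree_eq_sum_fintype {σ : Type*} [Fintype σ] (ν : σ →₀ ℕ) : ν.degree = ∑ i, ν i :=
  Finset.sum_subset (Finset.subset_univ _) (fun x _ hx => Finsupp.notMem_support_iff.mp hx)

lemma isHomog_degree {K : Type*} [CommRing K] {σ : Type*} {p : MvPolynomial σ K} {n : ℕ}
    (h : p.IsHomogeneous n) {d : σ →₀ ℕ} (hd : coeff d p ≠ 0) : d.degree = n := by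
  have := h hd; rw [Finsupp.degree_eq_weight_one]; exact this

section
variable {K : Type*} [Field K] {s m' c : ℕ}
  (q : Fin (m' + 1) → MvPolynomial (Fin (s + 1)) K) (dq : Fin (m' + 1) → ℕ)

def genSet (D₀ D : ℕ) : Set (MvPolynomial (Fin (s + 1)) K) :=
  { x | ∃ (α : Fin (m' + 1) → ℕ) (ν : Fin (s + 1) →₀ ℕ),
      ν.degree < D₀ ∧ (∑ j, α j * dq j) + ν.degree = D ∧
      x = (∏ j, q j ^ α j) * monomial ν 1 }

lemma mul_genSet {D₀ D : ℕ} (j : Fin (m' + 1)) {x : MvPolynomial (Fin (s + 1)) K}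
    (hx : x ∈ Submodule.span K (genSet q dq D₀ D)) :
    q j * x ∈ Submodule.span K (genSet q dq D₀ (D + dq j)) := by
  have hmem : (LinearMap.mulLeft K (q j)) x ∈
      (Submodule.span K (genSet q dq D₀ D)).map (LinearMap.mulLeft K (q j)) :=
    Submodule.mem_map_of_mem hx
  rw [Submodule.map_span] at hmem
  refine Submodule.span_le.mpr ?_ hmem
  rintro y ⟨z, ⟨α, ν, hν, hsum, rfl⟩, rfl⟩
  apply Submodule.subset_span
  refine ⟨fun l => α l + if l = j then 1 else 0, ν, hν, ?_, ?_⟩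
  · have h1 : ∑ l, (α l + if l = j then 1 else 0) * dq l
        = (∑ l, α l * dq l) + ∑ l, (if l = j then dq l else 0) := by
      rw [← Finset.sum_add_distrib]
      refine Finset.sum_congr rfl fun l _ => by split <;> ring
    rw [h1, Finset.sum_ite_eq' Finset.univ j, if_pos (Finset.mem_univ j)]
    omega
  · have h3 : (∏ l, q l ^ (α l + if l = j then 1 else 0))
        = (∏ l, q l ^ α l) * q j := by
      have : ∀ l, q l ^ (α l + if l = j then 1 else 0)
          = q l ^ α l * (if l = j then q l else 1) := by
        intro l; split <;> simp [pow_succ]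
      rw [Finset.prod_congr rfl fun l _ => this l, Finset.prod_mul_distrib,
        Finset.prod_ite_eq' Finset.univ j, if_pos (Finset.mem_univ j)]
    rw [LinearMap.mulLeft_apply, h3]; ring

lemma monomial_mem_genSpan (hc : 0 < c)
    (hq : ∀ j, (q j).IsHomogeneous (dq j)) (hdq : ∀ j, 0 < dq j)
    (hX : ∀ i, (X i : MvPolynomial (Fin (s + 1)) K) ^ c ∈ Ideal.span (Set.range q)) :
    ∀ D (ν : Fin (s + 1) →₀ ℕ), ν.degree = D →
      (monomial ν 1 : MvPolynomial (Fin (s + 1)) K) ∈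
        Submodule.span K (genSet q dq ((s + 1) * (c - 1) + 1 + ∑ j, dq j) D) := by
  set D₀ := (s + 1) * (c - 1) + 1 + ∑ j, dq j with hD₀
  intro D
  induction D using Nat.strong_induction_on with
  | _ D IH =>
  intro ν hν
  by_cases hD : D < D₀
  · apply Submodule.subset_span
    exact ⟨fun _ => 0, ν, hν ▸ hD, by simpa using hν, by simp⟩
  push_neg at hD
  -- find a variable with exponent ≥ c
  have hex : ∃ i, c ≤ ν i := by
    by_contra hno
    push_neg at hno
    have : ν.degree ≤ (s + 1) * (c - 1) := by
      rw [degree_eq_sum_fintype]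
      calc ∑ i, ν i ≤ ∑ _i : Fin (s + 1), (c - 1) :=
            Finset.sum_le_sum fun i _ => by have := hno i; omega
        _ = (s + 1) * (c - 1) := by simp [Finset.sum_const, mul_comm]
    omega
  obtain ⟨i, hci⟩ := hex
  have hdqD : ∀ j, dq j ≤ D := by
    intro j
    have : dq j ≤ ∑ l, dq l := Finset.single_le_sum (fun l _ => Nat.zero_le _) (Finset.mem_univ j)
    omega
  -- monomial ν 1 is in the ideal
  have hle : Finsupp.single i c ≤ ν := Finsupp.single_le_iff.mpr hci
  have hfac : (monomial ν 1 : MvPolynomial (Fin (s + 1)) K)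
      = X i ^ c * monomial (ν - Finsupp.single i c) 1 := by
    rw [X_pow_eq_monomial, monomial_mul, one_mul, add_tsub_cancel_of_le hle]
  have hmemI : (monomial ν 1 : MvPolynomial (Fin (s + 1)) K) ∈ Ideal.span (Set.range q) := by
    rw [hfac]; exact Ideal.mul_mem_right _ _ (hX i)
  have hhom : (monomial ν 1 : MvPolynomial (Fin (s + 1)) K).IsHomogeneous D :=
    isHomogeneous_monomial _ hν
  obtain ⟨f, hfhom, hfeq⟩ := exists_homog_decomp q dq hq hhom hdqD hmemI
  rw [hfeq]
  apply Submodule.sum_mem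
  intro j _
  -- f j * q j ∈ span
  have hkey : ∀ ρ ∈ (f j).support,
      (monomial ρ (coeff ρ (f j)) : MvPolynomial (Fin (s + 1)) K) * q j ∈
        Submodule.span K (genSet q dq D₀ D) := by
    intro ρ hρ
    have hρdeg : ρ.degree = D - dq j := isHomog_degree (hfhom j) (by simpa using hρ)
    have hmono : (monomial ρ 1 : MvPolynomial (Fin (s + 1)) K) ∈
        Submodule.span K (genSet q dq D₀ (D - dq j)) :=
      IH (D - dq j) (by have := hdq j; omega) ρ hρdeg
    have := mul_genSet q dq j hmono
    have hdj := hdqD j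
    rw [show D - dq j + dq j = D by omega] at this
    have h1 : (monomial ρ (coeff ρ (f j)) : MvPolynomial (Fin (s + 1)) K)
        = coeff ρ (f j) • monomial ρ 1 := by
      rw [smul_monomial, smul_eq_mul, mul_one]
    rw [h1, mul_comm, mul_smul_comm]
    exact Submodule.smul_mem _ _ this
  have hexp : f j * q j = ∑ ρ ∈ (f j).support, monomial ρ (coeff ρ (f j)) * q j := by
    conv_lhs => rw [as_sum (f j)]
    rw [Finset.sum_mul]
  rw [hexp]
  exact Submodule.sum_mem _ hkey

lemma no_small_span (hc : 0 < c) (hsm : m' + 1 ≤ s)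
    (hq : ∀ j, (q j).IsHomogeneous (dq j)) (hdq : ∀ j, 0 < dq j)
    (hX : ∀ i, (X i : MvPolynomial (Fin (s + 1)) K) ^ c ∈ Ideal.span (Set.range q)) :
    False := by
  classical
  set D₀ := (s + 1) * (c - 1) + 1 + ∑ j, dq j with hD₀def
  have hD₀pos : 0 < D₀ := by omega
  set B₀ : Fin (s + 1) →₀ ℕ := Finsupp.equivFunOnFinite.symm (fun _ => D₀) with hB₀
  set M := (Finset.Iic B₀).card with hM
  have hM1 : 1 ≤ M := Finset.card_pos.mpr ⟨0, Finset.mem_Iic.mpr zero_le⟩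
  have hs1 : 1 ≤ s := by omega
  set E := s ^ m' * M with hE
  have hE1 : 1 ≤ E :=
    Nat.one_le_iff_ne_zero.mpr (Nat.mul_ne_zero (pow_ne_zero _ (by omega)) (by omega))
  set D := s * E with hD
  -- the parameter finset
  set φ : (Fin (m' + 1) → ℕ) × (Fin (s + 1) →₀ ℕ) → MvPolynomial (Fin (s + 1)) K :=
    fun p => (∏ j, q j ^ p.1 j) * monomial p.2 1 with hφ
  set PF : Finset ((Fin (m' + 1) → ℕ) × (Fin (s + 1) →₀ ℕ)) :=
    ((Fintype.piFinset fun _ : Fin (m' + 1) => Finset.range (D + 1)) ×ˢ Finset.Iic B₀).filter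
      (fun p => p.2.degree < D₀ ∧ (∑ j, p.1 j * dq j) + p.2.degree = D) with hPF
  have hgen : genSet q dq D₀ D ⊆ (PF.image φ : Finset (MvPolynomial (Fin (s + 1)) K)) := by
    rintro x ⟨α, ν, hν, hsum, rfl⟩
    refine Finset.mem_coe.mpr (Finset.mem_image.mpr ⟨(α, ν), ?_, rfl⟩)
    refine Finset.mem_filter.mpr ⟨Finset.mem_product.mpr ⟨?_, ?_⟩, hν, hsum⟩
    · refine Fintype.mem_piFinset.mpr fun j => Finset.mem_range.mpr ?_
      show α j < D + 1
      have h1 : α j * dq j ≤ ∑ l, α l * dq l :=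
        Finset.single_le_sum (f := fun l => α l * dq l) (fun l _ => Nat.zero_le _)
          (Finset.mem_univ j)
      have h2 : α j ≤ α j * dq j := Nat.le_mul_of_pos_right _ (hdq j)
      omega
    · refine Finset.mem_Iic.mpr ((Finsupp.le_iff _ _).mpr fun i _ => ?_)
      show ν i ≤ B₀ i
      have h3 := Finsupp.le_degree i ν
      have h4 : B₀ i = D₀ := rfl
      omega
  set W : Submodule K (MvPolynomial (Fin (s + 1)) K) := Submodule.span K ((PF.image φ : Finset (MvPolynomial (Fin (s + 1)) K)) : Set (MvPolynomial (Fin (s + 1)) K)) with hW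
  have hWspan : Submodule.span K (genSet q dq D₀ D) ≤ W :=
    Submodule.span_mono hgen
  -- linearly independent monomials inside W
  set ψ : (Fin s → Fin (E + 1)) → (Fin (s + 1) →₀ ℕ) := fun g =>
    Finsupp.equivFunOnFinite.symm (Fin.snoc (fun j => (g j : ℕ)) (D - ∑ j, (g j : ℕ))) with hψ
  have hsumg : ∀ g : Fin s → Fin (E + 1), (∑ j, (g j : ℕ)) ≤ D := by
    intro g
    calc ∑ j, (g j : ℕ) ≤ ∑ _j : Fin s, E := Finset.sum_le_sum fun j _ => Fin.is_le (g j)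
      _ = s * E := by simp [Finset.sum_const, mul_comm]
  have hψdeg : ∀ g, (ψ g).degree = D := by
    intro g
    rw [degree_eq_sum_fintype]
    simp only [hψ, Finsupp.coe_equivFunOnFinite_symm]
    rw [Fin.sum_univ_castSucc]
    simp only [Fin.snoc_castSucc, Fin.snoc_last]
    have := hsumg g
    omega
  have hψinj : Function.Injective ψ := by
    intro g g' hgg
    have h2 : ∀ i, (Fin.snoc (fun j => (g j : ℕ)) (D - ∑ j, (g j : ℕ)) : Fin (s+1) → ℕ) i
        = (Fin.snoc (fun j => (g' j : ℕ)) (D - ∑ j, (g' j : ℕ)) : Fin (s+1) → ℕ) i := by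
      intro i
      have := congrArg (fun ν => Finsupp.equivFunOnFinite ν i) hgg
      simpa [hψ] using this
    funext j
    have := h2 (Fin.castSucc j)
    simp only [Fin.snoc_castSucc] at this
    exact Fin.ext this
  have hli : LinearIndependent K (fun g : Fin s → Fin (E + 1) => (monomial (ψ g) 1 : MvPolynomial (Fin (s + 1)) K)) := by
    have := (basisMonomials (Fin (s + 1)) K).linearIndependent.comp ψ hψinj
    rw [coe_basisMonomials] at this
    exact this
  have hmemW : ∀ g, (monomial (ψ g) 1 : MvPolynomial (Fin (s + 1)) K) ∈ W := fun g =>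
    hWspan (monomial_mem_genSpan q dq hc hq hdq hX D (ψ g) (hψdeg g))
  have hcard : (E + 1) ^ s ≤ (PF.image φ).card := by
    haveI : FiniteDimensional K W := FiniteDimensional.span_finset K _
    set v : (Fin s → Fin (E + 1)) → W := fun g => ⟨monomial (ψ g) 1, hmemW g⟩ with hv
    have hliv : LinearIndependent K v := by
      apply LinearIndependent.of_comp W.subtype
      exact hli
    have h1 := hliv.fintype_card_le_finrank
    have h2 : Module.finrank K W ≤ (PF.image φ).card := finrank_span_finset_le_card _
    have h3 : Fintype.card (Fin s → Fin (E + 1)) = (E + 1) ^ s := by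
      simp [Fintype.card_fun]
    omega
  -- upper bound on PF.card
  have hinj : PF.card ≤ (D + 1) ^ m' * M := by
    have hmaps : ∀ p ∈ PF, (p.1 ∘ Fin.succ, p.2) ∈
        (Fintype.piFinset fun _ : Fin m' => Finset.range (D + 1)) ×ˢ Finset.Iic B₀ := by
      intro p hp
      simp only [hPF, Finset.mem_filter, Finset.mem_product, Fintype.mem_piFinset] at hp
      exact Finset.mem_product.mpr
        ⟨Fintype.mem_piFinset.mpr fun j => hp.1.1 _, hp.1.2⟩
    have hinjOn : Set.InjOn (fun p : (Fin (m' + 1) → ℕ) × (Fin (s + 1) →₀ ℕ) =>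
        (p.1 ∘ Fin.succ, p.2)) PF := by
      intro p hp p' hp' heq
      simp only [Finset.mem_coe, hPF, Finset.mem_filter] at hp hp'
      have heq' : (p.1 ∘ Fin.succ, p.2) = (p'.1 ∘ Fin.succ, p'.2) := heq
      have htail : p.1 ∘ Fin.succ = p'.1 ∘ Fin.succ := (Prod.ext_iff.mp heq').1
      have hν : p.2 = p'.2 := (Prod.ext_iff.mp heq').2
      have hsucc : ∀ j : Fin m', p.1 j.succ = p'.1 j.succ := fun j => congrFun htail j
      have hs1' : ∑ j, p.1 j * dq j = ∑ j, p'.1 j * dq j := by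
        have e1 := hp.2.2
        have e2 := hp'.2.2
        rw [hν] at e1
        omega
      have hsum0 : p.1 0 * dq 0 = p'.1 0 * dq 0 := by
        rw [Fin.sum_univ_succ, Fin.sum_univ_succ] at hs1'
        have hteq : ∑ j : Fin m', p.1 j.succ * dq j.succ
            = ∑ j : Fin m', p'.1 j.succ * dq j.succ :=
          Finset.sum_congr rfl fun j _ => by rw [hsucc j]
        omega
      have h0 : p.1 0 = p'.1 0 := Nat.eq_of_mul_eq_mul_right (hdq 0) hsum0
      have hfst : p.1 = p'.1 := by
        funext i
        refine Fin.cases h0 (fun j => hsucc j) i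
      exact Prod.ext hfst hν
    have hcle := Finset.card_le_card_of_injOn _ hmaps hinjOn
    have hctar : ((Fintype.piFinset fun _ : Fin m' => Finset.range (D + 1)) ×ˢ
        Finset.Iic B₀).card = (D + 1) ^ m' * M := by
      rw [Finset.card_product, Fintype.card_piFinset]
      simp [Finset.prod_const]
      rfl
    omega
  -- final arithmetic
  have harith : (D + 1) ^ m' * M < (E + 1) ^ s := by
    have h1 : D + 1 ≤ s * (E + 1) := by
      calc D + 1 = s * E + 1 := by rw [hD]
        _ ≤ s * E + s := by omega
        _ = s * (E + 1) := by ring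
    have h2 : (D + 1) ^ m' * M ≤ (s * (E + 1)) ^ m' * M :=
      Nat.mul_le_mul_right _ (Nat.pow_le_pow_left h1 _)
    have h3 : (s * (E + 1)) ^ m' * M = (E + 1) ^ m' * E := by
      rw [mul_pow, hE]; ring
    have h4 : (E + 1) ^ m' * E < (E + 1) ^ m' * (E + 1) :=
      mul_lt_mul_of_pos_left (by omega) (pow_pos (by omega) m')
    calc (D + 1) ^ m' * M ≤ (E + 1) ^ m' * E := le_trans h2 (le_of_eq h3)
      _ < (E + 1) ^ m' * (E + 1) := h4
      _ = (E + 1) ^ (m' + 1) := (pow_succ _ _).symm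
      _ ≤ (E + 1) ^ s := Nat.pow_le_pow_right (by omega) hsm
  have hfinal : (E + 1) ^ s < (E + 1) ^ s :=
    lt_of_le_of_lt (hcard.trans ((Finset.card_image_le).trans hinj)) harith
  exact lt_irrefl _ hfinal
end

section App2
variable {K : Type*} [Field K] [CharZero K]

noncomputable abbrev dform (n d : ℕ) (a : Fin n → K) : MvPolynomial (Fin (n + 1)) K :=
  (∑ i : Fin n, MvPolynomial.C (a i) * MvPolynomial.X (Fin.castSucc i) ^ d) -
    MvPolynomial.X (Fin.last n) ^ d

lemma dform_coeff (n d : ℕ) (a : Fin n → K) (hd : 0 < d) :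
    coeff (Finsupp.single (Fin.last n) d) (dform n d a) = -1 := by
  rw [dform, coeff_sub, coeff_sum]
  have h1 : ∀ i : Fin n,
      coeff (Finsupp.single (Fin.last n) d) (C (a i) * X (Fin.castSucc i) ^ d) = 0 := by
    intro i
    rw [coeff_C_mul, coeff_X_pow]
    rw [if_neg, mul_zero]
    intro h
    have := (Finsupp.single_eq_single_iff _ _ _ _).mp h
    rcases this with ⟨h1, -⟩ | ⟨h1, -⟩
    · exact absurd h1 (Fin.castSucc_lt_last i).ne
    · omega
  rw [Finset.sum_congr rfl fun i _ => h1 i]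
  rw [coeff_X_pow, if_pos rfl]
  simp


lemma dform_ne_zero (n d : ℕ) (a : Fin n → K) (hd : 0 < d) : (dform n d a : MvPolynomial (Fin (n + 1)) K) ≠ 0 := by
  intro h
  have h2 := dform_coeff n d a hd
  rw [h, coeff_zero] at h2
  exact neg_ne_zero.mpr (one_ne_zero (α := K)) h2.symm


lemma pderiv_dform_castSucc (n d : ℕ) (a : Fin n → K) (j : Fin n) :
    pderiv (Fin.castSucc j) (dform n d a)
      = C ((d : K) * a j) * X (Fin.castSucc j) ^ (d - 1) := by
  classical
  rw [dform, map_sub, map_sum]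
  have hlast : pderiv (Fin.castSucc j) (X (Fin.last n) ^ d : MvPolynomial (Fin (n+1)) K) = 0 := by
    rw [pderiv_pow, pderiv_X, Pi.single_eq_of_ne (Fin.castSucc_lt_last j).ne']
    simp
  have hterm : ∀ i : Fin n,
      pderiv (Fin.castSucc j) (C (a i) * X (Fin.castSucc i) ^ d : MvPolynomial (Fin (n+1)) K)
        = if i = j then C ((d : K) * a j) * X (Fin.castSucc j) ^ (d - 1) else 0 := by
    intro i
    rw [pderiv_C_mul, pderiv_pow, pderiv_X]
    by_cases h : i = j
    · subst h
      rw [if_pos rfl, Pi.single_eq_same, C_mul, map_natCast]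
      ring
    · rw [if_neg h,
        Pi.single_eq_of_ne (fun hh => h (Fin.castSucc_injective n hh))]
      simp
  rw [Finset.sum_congr rfl fun i _ => hterm i, Finset.sum_ite_eq' Finset.univ j,
    if_pos (Finset.mem_univ j), hlast, sub_zero]


lemma pderiv_dform_last (n d : ℕ) (a : Fin n → K) :
    pderiv (Fin.last n) (dform n d a) = C (-(d : K)) * X (Fin.last n) ^ (d - 1) := by
  classical
  rw [dform, map_sub, map_sum]
  have hterm : ∀ i : Fin n,
      pderiv (Fin.last n) (C (a i) * X (Fin.castSucc i) ^ d : MvPolynomial (Fin (n+1)) K) = 0 := by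
    intro i
    rw [pderiv_C_mul, pderiv_pow, pderiv_X, Pi.single_eq_of_ne (Fin.castSucc_lt_last i).ne]
    simp
  rw [Finset.sum_congr rfl fun i _ => hterm i, Finset.sum_const_zero]
  rw [pderiv_pow, pderiv_X, Pi.single_eq_same, map_neg, map_natCast]
  ring


lemma key_bound (n d : ℕ) (hd1 : 1 ≤ d) (a : Fin n → K) (ha : ∀ i, a i ≠ 0)
    (k : ℕ) (hdec : HasStrengthDecomp d (dform n d a) k) : n + 1 ≤ 2 * k := by
  obtain ⟨g, h, e, hcond, hsum⟩ := hdec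
  rcases Nat.eq_zero_or_pos k with rfl | hk
  · exfalso
    exact dform_ne_zero n d a hd1 (by simpa using hsum)
  rcases eq_or_lt_of_le hd1 with hd1' | hd2
  · exfalso
    have := hcond ⟨0, hk⟩
    omega
  by_contra hcon
  push_neg at hcon
  have hdK : (d : K) ≠ 0 := Nat.cast_ne_zero.mpr (by omega)
  obtain ⟨m', hm'⟩ : ∃ m', k + k = m' + 1 := ⟨k + k - 1, by omega⟩
  set I := Ideal.span (Set.range (Sum.elim g h)) with hI
  have hXmem : ∀ i : Fin (n + 1), (X i : MvPolynomial (Fin (n + 1)) K) ^ (d - 1) ∈ I := by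
    intro i
    have hpd : pderiv i (dform n d a) ∈ I := by
      rw [hsum, map_sum]
      apply Submodule.sum_mem
      intro l _
      rw [pderiv_mul]
      refine Ideal.add_mem _ ?_ ?_
      · exact Ideal.mul_mem_left _ _ (Ideal.subset_span ⟨Sum.inr l, rfl⟩)
      · exact Ideal.mul_mem_right _ _ (Ideal.subset_span ⟨Sum.inl l, rfl⟩)
    obtain ⟨u, hu, hueq⟩ : ∃ u : K, u ≠ 0 ∧
        pderiv i (dform n d a) = C u * X i ^ (d - 1) := by
      induction i using Fin.lastCases with
      | last => exact ⟨-(d : K), neg_ne_zero.mpr hdK, pderiv_dform_last n d a⟩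
      | cast j => exact ⟨(d : K) * a j, mul_ne_zero hdK (ha j), pderiv_dform_castSucc n d a j⟩
    have hXi : (X i : MvPolynomial (Fin (n + 1)) K) ^ (d - 1)
        = C u⁻¹ * pderiv i (dform n d a) := by
      rw [hueq, ← mul_assoc, ← C_mul, inv_mul_cancel₀ hu, C_1, one_mul]
    rw [hXi]
    exact Ideal.mul_mem_left _ _ hpd
  set eqv : Fin (m' + 1) ≃ Fin k ⊕ Fin k :=
    (finCongr hm'.symm).trans finSumFinEquiv.symm with heqv
  set q : Fin (m' + 1) → MvPolynomial (Fin (n + 1)) K :=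
    fun j => Sum.elim g h (eqv j) with hq
  set dq : Fin (m' + 1) → ℕ :=
    fun j => Sum.elim e (fun l => d - e l) (eqv j) with hdq
  have hrange : Set.range q = Set.range (Sum.elim g h) := by
    rw [show q = (Sum.elim g h) ∘ eqv from rfl, Set.range_comp,
      Equiv.range_eq_univ, Set.image_univ]
  refine no_small_span q dq (show 0 < d - 1 by omega) (show m' + 1 ≤ n by omega) ?_ ?_ ?_
  · intro j
    rcases hj : eqv j with l | l
    · simpa [hq, hdq, hj] using (hcond l).2.2.1
    · simpa [hq, hdq, hj] using (hcond l).2.2.2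
  · intro j
    rcases hj : eqv j with l | l
    · have := (hcond l).1
      simpa [hdq, hj] using this
    · have := (hcond l).2.1
      simp only [hdq, hj, Sum.elim_inr]
      omega
  · intro i
    rw [hrange]
    exact hXmem i


end App2


/-- For `d` odd and `a₁, …, aₙ` nonzero, the form
`a₁x₁^d + ⋯ + aₙxₙ^d − x_{n+1}^d` on `K^{n+1}` has strength at least `(n+1)/2`. -/
theorem stmt14 {K : Type*} [Field K] [CharZero K] (n d : ℕ) (hd : Odd d)
    (a : Fin n → K) (ha : ∀ i, a i ≠ 0) :
    ((n + 1 : ℕ) : ℕ∞) ≤ 2 * strength d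
      ((∑ i : Fin n, MvPolynomial.C (a i) * MvPolynomial.X (Fin.castSucc i) ^ d) -
        MvPolynomial.X (Fin.last n) ^ d : MvPolynomial (Fin (n + 1)) K) := by
  have hd1 : 1 ≤ d := hd.pos
  show ((n + 1 : ℕ) : ℕ∞) ≤ 2 * strength d (dform n d a)
  set S := {s : ℕ∞ | ∃ k : ℕ, s = (k : ℕ∞) ∧ HasStrengthDecomp d (dform n d a) k} with hS
  have hstrength : strength d (dform n d a) = sInf S := rfl
  rcases Set.eq_empty_or_nonempty S with hSe | hSne
  · rw [hstrength, hSe, sInf_empty]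
    rw [ENat.mul_top (by norm_num)]
    exact le_top
  · obtain ⟨s0, k0, hs0, hk0⟩ := hSne
    set T := {k : ℕ | HasStrengthDecomp d (dform n d a) k} with hT
    have hTne : T.Nonempty := ⟨k0, hk0⟩
    have hmin : sInf T ∈ T := Nat.sInf_mem hTne
    have heq : sInf S = ((sInf T : ℕ) : ℕ∞) := by
      apply le_antisymm
      · exact sInf_le ⟨sInf T, rfl, hmin⟩
      · refine le_sInf ?_
        rintro b ⟨j, rfl, hj⟩
        exact_mod_cast Nat.sInf_le hj
    rw [hstrength, heq]
    have hb := key_bound n d hd1 a ha (sInf T) hmin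
    have h2 : ((n + 1 : ℕ) : ℕ∞) ≤ ((2 * sInf T : ℕ) : ℕ∞) := by exact_mod_cast hb
    calc ((n + 1 : ℕ) : ℕ∞) ≤ ((2 * sInf T : ℕ) : ℕ∞) := h2
      _ = 2 * ((sInf T : ℕ) : ℕ∞) := by push_cast; ring
end

section
/- Let K be a field of characteristic 0 and f a bihomogeneous form on K^r × K^r of bidegree (a, b), both positive, given by f(α, β) = Σ_{i=1}^r c_i α_i^a β_i^b with all c_i ≠ 0. Then f has strength at least (r−1)/2. -/
open MvPolynomial

lemma degree_sub_single {σ : Type*} [DecidableEq σ] (u : σ →₀ ℕ) (i : σ) (h0 : u i ≠ 0) :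
    (u - Finsupp.single i 1).degree = u.degree - 1 := by
  have h : u = (u - Finsupp.single i 1) + Finsupp.single i 1 := by
    ext j
    rcases eq_or_ne j i with rfl | hj
    · simp [Finsupp.single_apply]; omega
    · simp [Finsupp.single_apply, if_neg (Ne.symm hj)]
  simp only [Finsupp.degree_eq_weight_one] at *
  conv_rhs => rw [h]
  rw [map_add]
  simp [Finsupp.weight_apply, Finsupp.sum_single_index]

lemma pderiv_isHomogeneous {K σ : Type*} [CommSemiring K] [DecidableEq σ]
    {φ : MvPolynomial σ K} {n : ℕ} (i : σ) (h : φ.IsHomogeneous n) :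
    (pderiv i φ).IsHomogeneous (n - 1) := by
  conv_lhs => rw [φ.as_sum]
  rw [map_sum]
  refine IsHomogeneous.sum _ _ _ (fun u hu => ?_)
  rw [pderiv_monomial]
  rcases eq_or_ne (u i) 0 with h0 | h0
  · simp only [h0, Nat.cast_zero, mul_zero, monomial_zero]
    exact isHomogeneous_zero _ _ _
  · refine isHomogeneous_monomial _ ?_
    have hd : u.degree = n := by
      rw [Finsupp.degree_eq_weight_one]
      exact h (mem_support_iff.mp hu)
    have h1 : 1 ≤ u.degree := le_trans (by omega) (Finsupp.le_degree i u)
    rw [degree_sub_single u i h0, hd]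


lemma degree_add' {σ : Type*} (u v : σ →₀ ℕ) : (u + v).degree = u.degree + v.degree := by
  simp [Finsupp.degree_eq_weight_one, map_add]

lemma degree_single' {σ : Type*} (i : σ) (n : ℕ) : (Finsupp.single i n).degree = n := by
  simp [Finsupp.degree_eq_weight_one, Finsupp.weight_apply, Finsupp.sum_single_index]

lemma degree_eq_sum_univ {σ : Type*} [Fintype σ] (u : σ →₀ ℕ) :
    u.degree = ∑ i : σ, u i :=
  Finset.sum_subset (Finset.subset_univ _) (fun _ _ hx => Finsupp.notMem_support_iff.mp hx)

set_option maxHeartbeats 1000000 in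
set_option synthInstance.maxHeartbeats 400000 in
lemma counting_main {K : Type*} [Field K] {r M : ℕ} {J : Type} [Fintype J] (hM : 1 ≤ M)
    (P : J → MvPolynomial (Fin r) K) (Dg : J → ℕ) (hD1 : ∀ j, 1 ≤ Dg j) (hDM : ∀ j, Dg j ≤ M)
    (hP : ∀ j, (P j).IsHomogeneous (Dg j))
    (q : Fin r → J → MvPolynomial (Fin r) K)
    (hq : ∀ i j, (q i j).IsHomogeneous (M - Dg j))
    (hpow : ∀ i : Fin r, (X i : MvPolynomial (Fin r) K) ^ M = ∑ j, q i j * P j) :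
    r - 1 ≤ Fintype.card J := by
  classical
  by_contra hcon
  push_neg at hcon
  obtain ⟨r', rfl⟩ : ∃ r', r = r' + 2 := ⟨r - 2, by omega⟩
  set m := Fintype.card J with hm
  have hmr : m ≤ r' := by omega
  obtain ⟨N, hN⟩ : ∃ N, N = (r' + 2) * M := ⟨_, rfl⟩
  have hN1 : 1 ≤ N := by
    rw [hN]
    have : 0 < (r' + 2) * M := by positivity
    omega
  set S : ℕ → Set (MvPolynomial (Fin (r' + 2)) K) := fun e =>
    {F | ∃ (α : J → ℕ) (w : Fin (r' + 2) →₀ ℕ), (∑ j, α j) ≤ e ∧ (∀ i, w i < N) ∧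
      F = (∏ j, P j ^ α j) * monomial w 1} with hS
  -- the key spanning claim
  have claim : ∀ e (F : MvPolynomial (Fin (r' + 2)) K), F.IsHomogeneous e →
      F ∈ Submodule.span K (S e) := by
    intro e
    induction e using Nat.strong_induction_on with
    | _ e IH =>
    intro F hF
    nth_rewrite 1 [F.as_sum]
    refine Submodule.sum_mem _ (fun u hu => ?_)
    have hdeg : u.degree = e := by
      rw [Finsupp.degree_eq_weight_one]; exact hF (mem_support_iff.mp hu)
    have hred : monomial u (coeff u F) = (coeff u F) • monomial u (1 : K) := by
      rw [smul_monomial, smul_eq_mul, mul_one]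
    rw [hred]
    refine Submodule.smul_mem _ _ ?_
    by_cases he : e < N
    · refine Submodule.subset_span ?_
      refine ⟨0, u, by simp, fun i => lt_of_le_of_lt (hdeg ▸ Finsupp.le_degree i u) he, by simp⟩
    · push_neg at he
      have hexi : ∃ i, M ≤ u i := by
        by_contra hno
        push_neg at hno
        have hle : u.degree ≤ (r' + 2) * (M - 1) := by
          calc u.degree = ∑ i : Fin (r' + 2), u i := degree_eq_sum_univ u
          _ ≤ ∑ _i : Fin (r' + 2), (M - 1) :=
              Finset.sum_le_sum (fun i _ => by have := hno i; omega)
          _ = (r' + 2) * (M - 1) := by simp [Finset.sum_const, mul_comm]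
        have h5 : (r' + 2) * M ≤ (r' + 2) * (M - 1) := by
          rw [hN] at he; exact le_trans (hdeg ▸ he) hle
        have h6 := Nat.le_of_mul_le_mul_left h5 (by omega : 0 < r' + 2)
        omega
      obtain ⟨i, hi⟩ := hexi
      set u' := u - Finsupp.single i M with hu'
      have husum : u' + Finsupp.single i M = u := by
        ext j
        simp only [Finsupp.add_apply, hu', Finsupp.tsub_apply, Finsupp.single_apply]
        rcases eq_or_ne i j with rfl | hj
        · simp; omega
        · simp [hj]
      have hu'deg : u'.degree = e - M := by
        have := degree_add' u' (Finsupp.single i M)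
        rw [husum, hdeg, degree_single' i M] at this
        omega
      have hMN : M ≤ N := by rw [hN]; exact Nat.le_mul_of_pos_left M (by omega)
      have hMe : M ≤ e := le_trans hMN he
      have key : monomial u (1 : K) = ∑ j, (monomial u' 1 * q i j) * P j := by
        have h1 : monomial u (1 : K) = monomial u' 1 * X i ^ M := by
          rw [X_pow_eq_monomial, monomial_mul, husum, mul_one]
        rw [h1, hpow i, Finset.mul_sum]
        exact Finset.sum_congr rfl (fun j _ => (mul_assoc _ _ _).symm)
      rw [key]
      refine Submodule.sum_mem _ (fun j _ => ?_)
      have hGhom : (monomial u' (1 : K) * q i j).IsHomogeneous (e - Dg j) := by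
        have h1 : (monomial u' (1 : K)).IsHomogeneous (e - M) := isHomogeneous_monomial _ hu'deg
        have h2 := h1.mul (hq i j)
        have h3 : (e - M) + (M - Dg j) = e - Dg j := by
          have := hDM j; omega
        rwa [h3] at h2
      have hmem := IH (e - Dg j) (by have := hD1 j; have := hDM j; omega) _ hGhom
      have hmap : (monomial u' (1 : K) * q i j) * P j ∈
          Submodule.map (LinearMap.mulRight K (P j)) (Submodule.span K (S (e - Dg j))) :=
        Submodule.mem_map_of_mem hmem
      rw [Submodule.map_span] at hmap
      refine Submodule.span_le.mpr ?_ hmap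
      rintro x ⟨y, ⟨α, w, hαsum, hw, rfl⟩, rfl⟩
      refine Submodule.subset_span ?_
      refine ⟨Function.update α j (α j + 1), w, ?_, hw, ?_⟩
      · rw [Finset.sum_update_of_mem (Finset.mem_univ j)]
        have h4 : ∑ j', α j' = α j + ∑ j' ∈ Finset.univ \ {j}, α j' :=
          Finset.sum_eq_add_sum_sdiff_singleton_of_mem (Finset.mem_univ j) α
        have := hD1 j; have := hDM j
        omega
      · show (∏ j', P j' ^ α j') * monomial w 1 * P j = _
        have hfun : (fun j' => P j' ^ (Function.update α j (α j + 1) j')) =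
            Function.update (fun j' => P j' ^ α j') j (P j ^ (α j + 1)) := by
          funext j'
          rcases eq_or_ne j' j with rfl | hj'
          · simp
          · simp [Function.update_of_ne hj']
        rw [hfun, Finset.prod_update_of_mem (Finset.mem_univ j),
          Finset.prod_eq_mul_prod_sdiff_singleton_of_mem (Finset.mem_univ j) (fun j' => P j' ^ α j'),
          pow_succ]
        ring
  -- choice of parameters
  obtain ⟨Q, hQ⟩ : ∃ Q, Q = (r' + 2) ^ (r' + 2) * N ^ (r' + 2) := ⟨_, rfl⟩
  have hQ1 : 1 ≤ Q := by
    rw [hQ]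
    have : 0 < (r' + 2) ^ (r' + 2) * N ^ (r' + 2) := by positivity
    omega
  obtain ⟨D, hD⟩ : ∃ D, D = (r' + 1) * Q := ⟨_, rfl⟩
  -- the linearly independent family of monomials of degree D
  set uB : (Fin (r' + 1) → Fin (Q + 1)) → (Fin (r' + 2) →₀ ℕ) := fun b =>
    Finsupp.equivFunOnFinite.symm (Fin.lastCases (D - ∑ k, (b k : ℕ)) (fun j => (b j : ℕ))) with huB
  have hBsum : ∀ b : Fin (r' + 1) → Fin (Q + 1), ∑ k, ((b k : ℕ)) ≤ D := by
    intro b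
    calc ∑ k, ((b k : ℕ)) ≤ ∑ _k : Fin (r' + 1), Q :=
          Finset.sum_le_sum (fun k _ => by have := (b k).is_le; omega)
    _ = (r' + 1) * Q := by simp [Finset.sum_const, mul_comm]
    _ = D := hD.symm
  have huBc : ∀ (b : Fin (r' + 1) → Fin (Q + 1)) (j : Fin (r' + 1)),
      uB b j.castSucc = (b j : ℕ) := by
    intro b j; simp [huB]
  have huBl : ∀ b : Fin (r' + 1) → Fin (Q + 1),
      uB b (Fin.last (r' + 1)) = D - ∑ k, (b k : ℕ) := by
    intro b; simp [huB]
  have hdegB : ∀ b, (uB b).degree = D := by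
    intro b
    rw [degree_eq_sum_univ, Fin.sum_univ_castSucc]
    simp only [huBc, huBl]
    have := hBsum b
    omega
  have hinj : Function.Injective uB := by
    intro b b' hbb
    funext k
    have h1 := huBc b k
    have h2 := huBc b' k
    rw [hbb] at h1
    exact Fin.ext (h1.symm.trans h2)
  have hli : LinearIndependent K (fun b => monomial (uB b) (1 : K)) := by
    have h1 := (basisMonomials (Fin (r' + 2)) K).linearIndependent
    have h2 := h1.comp uB hinj
    have h3 : ⇑(basisMonomials (Fin (r' + 2)) K) ∘ uB = fun b => monomial (uB b) (1 : K) := by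
      funext b; simp [coe_basisMonomials, Function.comp]
    rwa [h3] at h2
  -- the finite spanning family
  set Φ : ((J → Fin (D + 1)) × (Fin (r' + 2) → Fin N)) → MvPolynomial (Fin (r' + 2)) K := fun p =>
    (∏ j, P j ^ (p.1 j : ℕ)) *
      monomial (Finsupp.equivFunOnFinite.symm (fun i => ((p.2 i : ℕ)))) 1 with hΦ
  have hSD : S D ⊆ Set.range Φ := by
    rintro x ⟨α, w, hαsum, hw, rfl⟩
    have hαle : ∀ j, α j < D + 1 := by
      intro j
      have : α j ≤ ∑ j', α j' :=
        Finset.single_le_sum (fun _ _ => Nat.zero_le _) (Finset.mem_univ j)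
      omega
    refine ⟨(fun j => ⟨α j, hαle j⟩, fun i => ⟨w i, hw i⟩), ?_⟩
    show (∏ j', P j' ^ (α j')) * monomial (Finsupp.equivFunOnFinite.symm fun i => w i) 1 = _
    rw [show (Finsupp.equivFunOnFinite.symm fun i => w i) = w from
      Finsupp.equivFunOnFinite_symm_coe w]
  letI : Fintype (Set.range Φ) := Set.fintypeRange Φ
  have hspan : Set.range (fun b => monomial (uB b) (1 : K)) ≤
      ↑(Submodule.span K (Set.range Φ)) := by
    rintro x ⟨b, rfl⟩
    exact Submodule.span_mono hSD (claim D _ (isHomogeneous_monomial _ (hdegB b)))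
  have hcard := linearIndependent_le_span' _ hli (Set.range Φ) hspan
  rw [Cardinal.mk_fintype] at hcard
  have hcard2 : Fintype.card (Fin (r' + 1) → Fin (Q + 1)) ≤ Fintype.card (Set.range Φ) := by
    exact_mod_cast hcard
  have hcard3 : Fintype.card (Set.range Φ) ≤
      Fintype.card ((J → Fin (D + 1)) × (Fin (r' + 2) → Fin N)) := by
    have : Nonempty (Fin (D+1)) := ⟨0⟩
    exact Fintype.card_range_le Φ
  have hfin : (Q + 1) ^ (r' + 1) ≤ (D + 1) ^ m * N ^ (r' + 2) := by
    have h1 := le_trans hcard2 hcard3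
    simpa [Fintype.card_fun, Fintype.card_prod, Fintype.card_fin, hm] using h1
  -- final arithmetic contradiction
  have e1 : D + 1 ≤ (r' + 2) * (Q + 1) := by
    calc D + 1 = (r' + 1) * Q + 1 := by rw [hD]
    _ ≤ (r' + 2) * Q + (r' + 2) :=
        Nat.add_le_add (Nat.mul_le_mul_right Q (by omega)) (by omega)
    _ = (r' + 2) * (Q + 1) := by ring
  have e2 : (D + 1) ^ m ≤ ((r' + 2) * (Q + 1)) ^ r' :=
    le_trans (Nat.pow_le_pow_left e1 m) (Nat.pow_le_pow_right (by positivity) hmr)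
  have e3 : (D + 1) ^ m * N ^ (r' + 2) ≤ ((r' + 2) ^ r' * N ^ (r' + 2)) * (Q + 1) ^ r' := by
    rw [mul_pow] at e2
    calc (D + 1) ^ m * N ^ (r' + 2) ≤ ((r' + 2) ^ r' * (Q + 1) ^ r') * N ^ (r' + 2) :=
          Nat.mul_le_mul_right _ e2
    _ = ((r' + 2) ^ r' * N ^ (r' + 2)) * (Q + 1) ^ r' := by ring
  have e4 : (r' + 2) ^ r' * N ^ (r' + 2) ≤ Q := by
    rw [hQ]

    exact Nat.mul_le_mul_right _ (Nat.pow_le_pow_right (by omega) (by omega))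
  have e5 : (Q + 1) ^ (r' + 1) ≤ Q * (Q + 1) ^ r' := by
    calc (Q + 1) ^ (r' + 1) ≤ (D + 1) ^ m * N ^ (r' + 2) := hfin
    _ ≤ ((r' + 2) ^ r' * N ^ (r' + 2)) * (Q + 1) ^ r' := e3
    _ ≤ Q * (Q + 1) ^ r' := Nat.mul_le_mul_right _ e4
  have e6 : (Q + 1) ^ (r' + 1) = (Q + 1) * (Q + 1) ^ r' := by ring
  nlinarith [pow_pos (show 0 < Q + 1 by omega) r']

/-- The bihomogeneous form `f(α, β) = ∑ c_i α_i^a β_i^b` on `K^r × K^r` with `a, b > 0` and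
all `c_i ≠ 0` has strength at least `(r-1)/2`, i.e. `r - 1 ≤ 2 ⋅ str(f)`. -/
theorem stmt15 {K : Type*} [Field K] [CharZero K] (r a b : ℕ) (ha : 0 < a) (hb : 0 < b)
    (c : Fin r → K) (hc : ∀ i, c i ≠ 0) :
    ((r - 1 : ℕ) : ℕ∞) ≤ 2 * strength (a + b)
      (∑ i : Fin r, MvPolynomial.C (c i) *
        MvPolynomial.X (Sum.inl i) ^ a * MvPolynomial.X (Sum.inr i) ^ b :
        MvPolynomial (Fin r ⊕ Fin r) K) := by
  classical
  set f : MvPolynomial (Fin r ⊕ Fin r) K :=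
    ∑ i : Fin r, C (c i) * X (Sum.inl i) ^ a * X (Sum.inr i) ^ b with hfdef
  have main : ∀ k, HasStrengthDecomp (a + b) f k → r - 1 ≤ 2 * k := by
    intro k hk
    obtain ⟨g, h, e, hgh, hf⟩ := hk
    have hca : ∀ i, (c i * (a : K)) ≠ 0 := fun i =>
      mul_ne_zero (hc i) (Nat.cast_ne_zero.mpr (by omega))
    have hpd : ∀ i : Fin r, pderiv (Sum.inl i) f =
        C (c i * a) * X (Sum.inl i) ^ (a - 1) * X (Sum.inr i) ^ b := by
      intro i
      rw [hfdef, map_sum, Finset.sum_eq_single i]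
      · simp only [pderiv_mul, pderiv_pow, pderiv_X_self, pderiv_C,
          pderiv_X_of_ne (show (Sum.inr i : Fin r ⊕ Fin r) ≠ Sum.inl i by simp)]
        simp only [mul_one, mul_zero, zero_mul, add_zero, zero_add]
        rw [show C (c i * (a : K)) = C (c i) * (a : MvPolynomial (Fin r ⊕ Fin r) K) by
          rw [C_mul]; norm_cast]
        ring
      · intro k' _ hk'
        simp [pderiv_mul, pderiv_pow, pderiv_C,
          pderiv_X_of_ne (show (Sum.inr k' : Fin r ⊕ Fin r) ≠ Sum.inl i by simp),
          pderiv_X_of_ne (show (Sum.inl k' : Fin r ⊕ Fin r) ≠ Sum.inl i by simp [hk'])]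
      · simp
    have hsum : ∀ i : Fin r, pderiv (Sum.inl i) f =
        ∑ j, (pderiv (Sum.inl i) (g j) * h j + g j * pderiv (Sum.inl i) (h j)) := by
      intro i
      rw [hf, map_sum]
      exact Finset.sum_congr rfl (fun j _ => pderiv_mul)
    set E : Fin r → MvPolynomial (Fin r ⊕ Fin r) K := fun i =>
      C ((c i * a)⁻¹) * X (Sum.inl i) ^ b * X (Sum.inr i) ^ (a - 1) with hE
    have hEhom : ∀ i, (E i).IsHomogeneous (a + b - 1) := by
      intro i
      have h1 := ((isHomogeneous_C (Fin r ⊕ Fin r) ((c i * (a:K))⁻¹)).mul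
        (isHomogeneous_X_pow (Sum.inl i) b)).mul (isHomogeneous_X_pow (Sum.inr i) (a-1))
      have h2 : 0 + b + (a - 1) = a + b - 1 := by omega
      rwa [h2] at h1
    have hkey : ∀ i : Fin r, X (Sum.inl i) ^ (a + b - 1) * X (Sum.inr i) ^ (a + b - 1) =
        ∑ j, ((E i * pderiv (Sum.inl i) (g j)) * h j
          + (E i * pderiv (Sum.inl i) (h j)) * g j) := by
      intro i
      have h1 : E i * pderiv (Sum.inl i) f =
          X (Sum.inl i) ^ (a + b - 1) * X (Sum.inr i) ^ (a + b - 1) := by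
        rw [hpd i, hE]
        have h2 : C ((c i * (a:K))⁻¹) * X (Sum.inl i) ^ b * X (Sum.inr i) ^ (a-1) *
            (C (c i * (a:K)) * X (Sum.inl i) ^ (a-1) * X (Sum.inr i) ^ b) =
            (C ((c i * (a:K))⁻¹) * C (c i * (a:K))) *
              ((X (Sum.inl i) ^ b * X (Sum.inl i) ^ (a-1)) *
              (X (Sum.inr i) ^ (a-1) * X (Sum.inr i) ^ b)) := by ring
        rw [h2, ← C_mul, inv_mul_cancel₀ (hca i), C_1, one_mul, ← pow_add, ← pow_add,
          show b + (a - 1) = a + b - 1 by omega, show a - 1 + b = a + b - 1 by omega]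
      rw [← h1, hsum i, Finset.mul_sum]
      exact Finset.sum_congr rfl (fun j _ => by ring)
    set π : Fin r ⊕ Fin r → Fin r := Sum.elim id id with hπ
    set M := 2 * (a + b) - 2 with hM
    set P : Fin k ⊕ Fin k → MvPolynomial (Fin r) K :=
      Sum.elim (fun j => rename π (g j)) (fun j => rename π (h j)) with hP
    set Dg : Fin k ⊕ Fin k → ℕ := Sum.elim (fun j => e j) (fun j => a + b - e j) with hDg
    set q : Fin r → Fin k ⊕ Fin k → MvPolynomial (Fin r) K := fun i => Sum.elim
      (fun j => rename π (E i * pderiv (Sum.inl i) (h j)))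
      (fun j => rename π (E i * pderiv (Sum.inl i) (g j))) with hq
    have hcount : r - 1 ≤ Fintype.card (Fin k ⊕ Fin k) := by
      refine counting_main (M := M) (by omega) P Dg ?_ ?_ ?_ q ?_ ?_
      · rintro (j | j) <;> simp only [hDg, Sum.elim_inl, Sum.elim_inr] <;>
          [exact (hgh j).1; (have := (hgh j).2.1; omega)]
      · rintro (j | j) <;> simp only [hDg, Sum.elim_inl, Sum.elim_inr] <;>
          (have h1 := (hgh j).1; have h2 := (hgh j).2.1; omega)
      · rintro (j | j) <;> simp only [hP, hDg, Sum.elim_inl, Sum.elim_inr]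
        · exact ((hgh j).2.2.1).rename_isHomogeneous
        · exact ((hgh j).2.2.2).rename_isHomogeneous
      · rintro i (j | j) <;> simp only [hq, hDg, Sum.elim_inl, Sum.elim_inr]
        · have h1 := (hEhom i).mul (pderiv_isHomogeneous (Sum.inl i) ((hgh j).2.2.2))
          have h2 : (a + b - 1) + ((a + b - e j) - 1) = M - e j := by
            have := (hgh j).1; have := (hgh j).2.1; omega
          rw [h2] at h1
          exact h1.rename_isHomogeneous
        · have h1 := (hEhom i).mul (pderiv_isHomogeneous (Sum.inl i) ((hgh j).2.2.1))
          have h2 : (a + b - 1) + (e j - 1) = M - (a + b - e j) := by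
            have := (hgh j).1; have := (hgh j).2.1; omega
          rw [h2] at h1
          exact h1.rename_isHomogeneous
      · intro i
        have h2 := congrArg (rename π) (hkey i)
        simp only [map_sum, map_mul, map_pow, rename_X, map_add] at h2
        have h3 : (π (Sum.inl i)) = i := rfl
        have h4 : (π (Sum.inr i)) = i := rfl
        rw [h3, h4, ← pow_add, show (a + b - 1) + (a + b - 1) = M by omega] at h2
        rw [h2, Fintype.sum_sum_type]
        simp only [hq, hP, Sum.elim_inl, Sum.elim_inr]
        rw [← Finset.sum_add_distrib]
        refine Finset.sum_congr rfl (fun j _ => ?_)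
        simp only [map_mul]
        ring
    have : Fintype.card (Fin k ⊕ Fin k) = k + k := by simp
    omega
  -- glue with sInf
  have h1 : ((r / 2 : ℕ) : ℕ∞) ≤ strength (a + b) f := by
    apply le_sInf
    rintro x ⟨k, rfl, hk⟩
    have := main k hk
    exact_mod_cast Nat.cast_le.mpr (by omega : r / 2 ≤ k)
  calc ((r - 1 : ℕ) : ℕ∞) ≤ ((2 * (r / 2) : ℕ) : ℕ∞) := by
        exact_mod_cast Nat.cast_le.mpr (by omega : r - 1 ≤ 2 * (r / 2))
  _ = 2 * ((r / 2 : ℕ) : ℕ∞) := by push_cast; ring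
  _ ≤ 2 * strength (a + b) f := mul_le_mul_right h1 2
end
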